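/- arXiv:2509.05247 — 5 statements merged into one kernel-verified Lean document; each statement's English description precedes it below -/
import Mathlib

section
/- Let g ∈ BV_loc^lc(ℝ,ℝ) and f : [a,b] → ℝ be g-continuous on [a,b]. Then: (1) f is left-continuous at each t ∈ (a,b]; (2) if g is continuous at t ∈ [a,b] then so is f; (3) if g is constant on some interval [u,v] ⊆ [a,b], then f is constant on [u,v]. -/
open Set Filter MeasureTheory Topology
open scoped Classical

/-- Total variation of `g` on the interval `[a,b]`. -/
noncomputable def varOn (g : ℝ → ℝ) (a b : ℝ) : ℝ := (eVariationOn g (Set.Icc a b)).toReal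

/-- `g` is left-continuous at every point. -/
def LeftCont (g : ℝ → ℝ) : Prop := ∀ t : ℝ, ContinuousWithinAt g (Set.Iio t) t

/-- `g` has locally bounded variation. -/
def LocBV (g : ℝ → ℝ) : Prop := ∀ a b : ℝ, BoundedVariationOn g (Set.Icc a b)

/-- The variation function `g̃` of `g`. -/
noncomputable def varFun (g : ℝ → ℝ) (t : ℝ) : ℝ :=
  if 0 ≤ t then g 0 + varOn g 0 t else g 0 - varOn g t 0

/-- Jump (discontinuity) points of a left-continuous `g`. -/
def Dg (g : ℝ → ℝ) : Set ℝ := {t | ¬ ContinuousWithinAt g (Set.Ioi t) t}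

/-- Interiors of constancy intervals of `g`. -/
def Cg (g : ℝ → ℝ) : Set ℝ :=
  {t | ∃ ε > 0, ∀ s ∈ Set.Ioo (t - ε) (t + ε), g s = g t}

/-- Left endpoints of constancy components of `g` which are not jump points. -/
def Ngm (g : ℝ → ℝ) : Set ℝ :=
  {t | t ∉ Dg g ∧ t ∉ Cg g ∧ ∃ ε > 0, ∀ s ∈ Set.Ioo t (t + ε), g s = g t}

/-- Right endpoints of constancy components of `g` which are not jump points. -/
def Ngp (g : ℝ → ℝ) : Set ℝ :=
  {t | t ∉ Dg g ∧ t ∉ Cg g ∧ ∃ ε > 0, ∀ s ∈ Set.Ioo (t - ε) t, g s = g t}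

/-- The point `t*`: `t` itself, unless `t` lies in the interior of a constancy interval,
in which case it is the right endpoint of that constancy component. -/
noncomputable def tStar (g : ℝ → ℝ) (t : ℝ) : ℝ :=
  if t ∈ Cg g then sSup {s | t ≤ s ∧ ∀ u ∈ Set.Icc t s, g u = g t} else t

/-- Stieltjes derivative of `F` w.r.t. a possibly non-monotonic derivator `g`. -/
def HasStieltjesDerivAt (g F : ℝ → ℝ) (t d : ℝ) : Prop :=
  (t ∈ Dg g →
    Tendsto (fun s => (F s - F t) / (g s - g t)) (nhdsWithin t (Set.Ioi t)) (nhds d)) ∧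
  (t ∉ Dg g →
    Tendsto (fun s => (F s - F (tStar g t)) / (g s - g (tStar g t)))
      (nhdsWithin (tStar g t) {s | g s ≠ g (tStar g t)}) (nhds d))

/-- `f` is `g`-continuous on `[a,b]` (w.r.t. the pseudometric `|g̃ s - g̃ t|`). -/
def GCont (g f : ℝ → ℝ) (a b : ℝ) : Prop :=
  ∀ t ∈ Set.Icc a b, ∀ ε > 0, ∃ δ > 0, ∀ s ∈ Set.Icc a b,
    |varFun g s - varFun g t| < δ → |f s - f t| < ε

/-- `F` is `g`-absolutely continuous on `[a,b]`. -/
def GAC (g F : ℝ → ℝ) (a b : ℝ) : Prop :=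
  ∀ ε > 0, ∃ δ > 0, ∀ n : ℕ, ∀ c d : ℕ → ℝ,
    (∀ i < n, a ≤ c i ∧ c i < d i ∧ d i ≤ b) →
    (∀ i < n, ∀ j < n, i ≠ j → Disjoint (Set.Ioo (c i) (d i)) (Set.Ioo (c j) (d j))) →
    (∑ i ∈ Finset.range n, varOn g (c i) (d i)) < δ →
    (∑ i ∈ Finset.range n, |F (d i) - F (c i)|) < ε

/-- Integral of `f` over `s` with respect to a signed measure `μ`. -/
noncomputable def sInt (μ : MeasureTheory.SignedMeasure ℝ) (f : ℝ → ℝ) (s : Set ℝ) : ℝ :=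
  (∫ x in s, f x ∂μ.toJordanDecomposition.posPart) -
    (∫ x in s, f x ∂μ.toJordanDecomposition.negPart)

/-- The function `φ` of the everywhere version of the FTC. -/
noncomputable def phi (g : ℝ → ℝ) (t : ℝ) : ℝ :=
  if t ∈ Ngm g then
    Filter.liminf (fun s => |(g s - g t) / (varFun g s - varFun g t)|)
      (nhdsWithin t (Set.Iio t))
  else if t ∈ Dg g ∪ Cg g ∪ Ngp g then
    Filter.liminf (fun s => |(g s - g (tStar g t)) / (varFun g s - varFun g (tStar g t))|)
      (nhdsWithin (tStar g t) (Set.Ioi (tStar g t)))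
  else
    Filter.liminf (fun s => |(g s - g t) / (varFun g s - varFun g t)|)
      (nhdsWithin t {t}ᶜ)


section Aux

lemma evar_split (g : ℝ → ℝ) {a b c : ℝ} (hab : a ≤ b) (hbc : b ≤ c) :
    eVariationOn g (Icc a b) + eVariationOn g (Icc b c) = eVariationOn g (Icc a c) := by
  have h1 : IsGreatest (Icc a b) b := ⟨⟨hab, le_rfl⟩, fun x hx => hx.2⟩
  have h2 : IsLeast (Icc b c) b := ⟨⟨le_rfl, hbc⟩, fun x hx => hx.1⟩
  rw [← Icc_union_Icc_eq_Icc hab hbc]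
  exact (eVariationOn.union g h1 h2).symm

lemma varOn_add {g : ℝ → ℝ} (hbv : LocBV g) {a b c : ℝ} (hab : a ≤ b) (hbc : b ≤ c) :
    varOn g a b + varOn g b c = varOn g a c := by
  unfold varOn
  rw [← ENNReal.toReal_add (hbv a b) (hbv b c), evar_split g hab hbc]

lemma varOn_mono {g : ℝ → ℝ} (hbv : LocBV g) {a b a' b' : ℝ} (ha : a' ≤ a) (hb : b ≤ b') :
    varOn g a b ≤ varOn g a' b' :=
  ENNReal.toReal_mono (hbv a' b') (eVariationOn.mono g (Icc_subset_Icc ha hb))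

lemma varOn_nonneg (g : ℝ → ℝ) (a b : ℝ) : 0 ≤ varOn g a b := ENNReal.toReal_nonneg

lemma varFun_sub {g : ℝ → ℝ} (hbv : LocBV g) {s t : ℝ} (h : s ≤ t) :
    varFun g t - varFun g s = varOn g s t := by
  unfold varFun
  rcases le_or_gt 0 s with hs | hs
  · rw [if_pos hs, if_pos (hs.trans h)]
    have := varOn_add hbv hs h
    ring_nf
    linarith
  · rcases le_or_gt 0 t with ht | ht
    · rw [if_pos ht, if_neg (not_le.2 hs)]
      have := varOn_add hbv hs.le ht
      ring_nf
      linarith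
    · rw [if_neg (not_le.2 hs), if_neg (not_le.2 ht)]
      have := varOn_add hbv h ht.le
      ring_nf
      linarith

lemma keyLeft (g : ℝ → ℝ) {t c : ℝ} (hct : c < t)
    (hfin : eVariationOn g (Icc c t) ≠ ⊤)
    (hg : ContinuousWithinAt g (Iio t) t) {ε : ℝ} (hε : 0 < ε) :
    ∃ s, c ≤ s ∧ s < t ∧ (eVariationOn g (Icc s t)).toReal < ε := by
  obtain ⟨δ, hδ, hδ'⟩ := Metric.continuousWithinAt_iff.mp hg (ε/4) (by linarith)
  set w := max c (t - δ/2) with hw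
  have hwc : c ≤ w := le_max_left _ _
  have hwt : w < t := max_lt hct (by linarith)
  have hnear : ∀ x, w ≤ x → x < t → dist (g x) (g t) < ε/4 := by
    intro x hx1 hx2
    refine hδ' hx2 ?_
    have h2 : t - δ/2 ≤ x := le_trans (le_max_right _ _) hx1
    rw [Real.dist_eq, abs_of_nonpos (by linarith)]
    linarith
  set V := eVariationOn g (Icc w t) with hV
  have hVfin : V ≠ ⊤ := fun h =>
    hfin (eq_top_mono (eVariationOn.mono g (Icc_subset_Icc hwc le_rfl)) h)
  by_cases hVε : V.toReal < ε
  · exact ⟨w, hwc, hwt, hVε⟩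
  have hεV : ENNReal.ofReal ε ≤ V := by
    rw [← ENNReal.ofReal_toReal hVfin]
    exact ENNReal.ofReal_le_ofReal (not_lt.1 hVε)
  have final : ∀ x, w ≤ x → x < t →
      V - ENNReal.ofReal (ε/4) < eVariationOn g (Icc w x) + ENNReal.ofReal (ε/4) →
      (eVariationOn g (Icc x t)).toReal < ε := by
    intro x hx1 hx2 hlt
    set A := eVariationOn g (Icc w x) with hA
    set B := eVariationOn g (Icc x t) with hB
    have hAB : A + B = V := evar_split g hx1 hx2.le
    have hAfin : A ≠ ⊤ := fun h => hVfin (by rw [← hAB, h, top_add])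
    have hBfin : B ≠ ⊤ := fun h => hVfin (by rw [← hAB, h, add_top])
    have he4 : ENNReal.ofReal (ε/4) ≤ V :=
      le_trans (ENNReal.ofReal_le_ofReal (by linarith)) hεV
    have h1 : (V - ENNReal.ofReal (ε/4)).toReal = V.toReal - ε/4 := by
      rw [ENNReal.toReal_sub_of_le he4 hVfin, ENNReal.toReal_ofReal (by linarith)]
    have h2 : (A + ENNReal.ofReal (ε/4)).toReal = A.toReal + ε/4 := by
      rw [ENNReal.toReal_add hAfin ENNReal.ofReal_ne_top, ENNReal.toReal_ofReal (by linarith)]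
    have h4 : (V - ENNReal.ofReal (ε/4)).toReal < (A + ENNReal.ofReal (ε/4)).toReal :=
      ENNReal.toReal_strict_mono (ENNReal.add_ne_top.2 ⟨hAfin, ENNReal.ofReal_ne_top⟩) hlt
    have h3 : V.toReal = A.toReal + B.toReal := by
      rw [← hAB, ENNReal.toReal_add hAfin hBfin]
    rw [h1, h2, h3] at h4
    linarith
  have hVpos : V ≠ 0 := fun h => by
    rw [h] at hεV
    exact absurd (le_antisymm hεV zero_le) (ENNReal.ofReal_pos.2 hε).ne'
  have hlt2 : V - ENNReal.ofReal (ε/4) < eVariationOn g (Icc w t) :=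
    ENNReal.sub_lt_self hVfin hVpos (ENNReal.ofReal_pos.2 (by linarith)).ne'
  rw [eVariationOn] at hlt2
  obtain ⟨⟨n, u, hu, ut⟩, hsum⟩ := lt_iSup_iff.mp hlt2
  by_cases hall : ∀ i ≤ n, u i < t
  · refine ⟨u n, hwc.trans (ut n).1, hall n le_rfl, final (u n) (ut n).1 (hall n le_rfl) ?_⟩
    refine hsum.trans_le (le_trans ?_ le_self_add)
    have := eVariationOn.sum_le_of_monotoneOn_Icc (f := g) (m := 0) (n := n) (u := u)
      (s := Icc w (u n)) (hu.monotoneOn _) (fun i hi => ⟨(ut i).1, hu hi.2⟩)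
    rw [Finset.range_eq_Ico]
    exact this
  · push_neg at hall
    obtain ⟨i₀, hi₀n, hi₀⟩ := hall
    have hex : ∃ i, u i = t := ⟨i₀, le_antisymm (ut i₀).2 hi₀⟩
    set k := Nat.find hex with hk
    have hkt : u k = t := Nat.find_spec hex
    have hkn : k ≤ n := le_trans (Nat.find_min' hex (le_antisymm (ut i₀).2 hi₀)) hi₀n
    rcases Nat.eq_zero_or_pos k with hk0 | hkpos
    · have h0 : u 0 = t := by rw [← hk0]; exact hkt
      have hallt : ∀ i, u i = t := fun i =>
        le_antisymm (ut i).2 (by rw [← h0]; exact hu (Nat.zero_le i))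
      have hz : ∑ i ∈ Finset.range n, edist (g (u (i+1))) (g (u i)) = 0 :=
        Finset.sum_eq_zero fun i _ => by rw [hallt, hallt, edist_self]
      rw [hz] at hsum
      exact absurd hsum (by simp)
    · obtain ⟨j, hjk⟩ : ∃ j, k = j + 1 := ⟨k - 1, (Nat.succ_pred_eq_of_pos hkpos).symm⟩
      have hjt : u j < t := lt_of_le_of_ne (ut j).2 (Nat.find_min hex (by omega))
      have htail : ∀ i, k ≤ i → u i = t := fun i hi =>
        le_antisymm (ut i).2 (by rw [← hkt]; exact hu hi)
      have hsplit : ∑ i ∈ Finset.range n, edist (g (u (i+1))) (g (u i))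
          = ∑ i ∈ Finset.range k, edist (g (u (i+1))) (g (u i)) := by
        rw [← Finset.sum_range_add_sum_Ico _ hkn]
        have hz : ∑ i ∈ Finset.Ico k n, edist (g (u (i+1))) (g (u i)) = 0 :=
          Finset.sum_eq_zero fun i hi => by
            rw [htail i (Finset.mem_Ico.1 hi).1,
              htail (i+1) (le_trans (Finset.mem_Ico.1 hi).1 (Nat.le_succ i)), edist_self]
        rw [hz, add_zero]
      rw [hsplit, hjk, Finset.sum_range_succ] at hsum
      refine ⟨u j, hwc.trans (ut j).1, hjt, final (u j) (ut j).1 hjt ?_⟩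
      refine hsum.trans_le (add_le_add ?_ ?_)
      · have := eVariationOn.sum_le_of_monotoneOn_Icc (f := g) (m := 0) (n := j) (u := u)
          (s := Icc w (u j)) (hu.monotoneOn _) (fun i hi => ⟨(ut i).1, hu hi.2⟩)
        rw [Finset.range_eq_Ico]
        exact this
      · have hujt : u (j+1) = t := by rw [← hjk]; exact hkt
        rw [hujt, edist_dist, dist_comm]
        exact ENNReal.ofReal_le_ofReal (hnear (u j) (ut j).1 hjt).le

lemma keyRight (g : ℝ → ℝ) {t d : ℝ} (htd : t < d)
    (hfin : eVariationOn g (Icc t d) ≠ ⊤)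
    (hg : ContinuousWithinAt g (Ioi t) t) {ε : ℝ} (hε : 0 < ε) :
    ∃ s, t < s ∧ s ≤ d ∧ (eVariationOn g (Icc t s)).toReal < ε := by
  have hcomp : ∀ p q : ℝ,
      eVariationOn (g ∘ Neg.neg) (Icc p q) = eVariationOn g (Icc (-q) (-p)) := by
    intro p q
    rw [eVariationOn.comp_eq_of_antitoneOn g Neg.neg (fun x _ y _ h => neg_le_neg h)]
    congr 1
    ext x
    simp only [mem_image, mem_Icc]
    constructor
    · rintro ⟨y, ⟨h1, h2⟩, rfl⟩
      constructor <;> linarith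
    · rintro ⟨h1, h2⟩
      exact ⟨-x, ⟨by linarith, by linarith⟩, by ring⟩
  have hGc : ContinuousWithinAt (g ∘ Neg.neg) (Iio (-t)) (-t) := by
    have h1 : ContinuousWithinAt g (Ioi t) (-(-t)) := by rwa [neg_neg]
    exact h1.comp continuous_neg.continuousWithinAt fun x hx => by
      simp only [mem_Ioi]
      simp only [mem_Iio] at hx
      linarith
  have hfin' : eVariationOn (g ∘ Neg.neg) (Icc (-d) (-t)) ≠ ⊤ := by
    rw [hcomp]
    simp only [neg_neg]
    exact hfin
  obtain ⟨s', h1, h2, h3⟩ := keyLeft (g ∘ Neg.neg) (show -d < -t by linarith) hfin' hGc hε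
  rw [hcomp, neg_neg] at h3
  exact ⟨-s', by linarith, by linarith, h3⟩

end Aux

/-- Basic properties of `g`-continuous functions. -/
theorem stmt5 (a b : ℝ) (hab : a < b) (g f : ℝ → ℝ) (hlc : LeftCont g) (hbv : LocBV g)
    (hf : GCont g f a b) :
    (∀ t ∈ Set.Ioc a b, ContinuousWithinAt f (Set.Icc a b ∩ Set.Iio t) t) ∧
    (∀ t ∈ Set.Icc a b, ContinuousWithinAt g (Set.Icc a b) t →
      ContinuousWithinAt f (Set.Icc a b) t) ∧
    (∀ u v : ℝ, Set.Icc u v ⊆ Set.Icc a b → (∀ x ∈ Set.Icc u v, g x = g u) →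
      ∀ x ∈ Set.Icc u v, f x = f u) := by
  refine ⟨?_, ?_, ?_⟩
  · -- left continuity
    intro t ht
    rw [Metric.continuousWithinAt_iff]
    intro ε hε
    obtain ⟨δf, hδf, hδf'⟩ := hf t ⟨ht.1.le, ht.2⟩ ε hε
    obtain ⟨s₀, hs₀c, hs₀t, hs₀⟩ :=
      keyLeft g (show t - 1 < t by linarith) (hbv (t-1) t) (hlc t) hδf
    refine ⟨t - s₀, by linarith, ?_⟩
    rintro y ⟨hy1, hy2⟩ hyd
    rw [Real.dist_eq]
    refine hδf' y hy1 ?_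
    have hyt : y < t := hy2
    have hys : s₀ ≤ y := by
      rw [Real.dist_eq, abs_of_nonpos (by linarith)] at hyd
      linarith
    have hv : varFun g t - varFun g y = varOn g y t := varFun_sub hbv hyt.le
    rw [abs_sub_comm, abs_of_nonneg (by rw [hv]; exact varOn_nonneg _ _ _), hv]
    exact lt_of_le_of_lt (varOn_mono hbv hys le_rfl) hs₀
  · -- continuity where g continuous
    intro t ht hg
    rw [Metric.continuousWithinAt_iff]
    intro ε hε
    obtain ⟨δf, hδf, hδf'⟩ := hf t ht ε hε
    obtain ⟨s₀, hs₀c, hs₀t, hs₀⟩ :=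
      keyLeft g (show t - 1 < t by linarith) (hbv (t-1) t) (hlc t) hδf
    have hleft : ∀ y ∈ Icc a b, s₀ ≤ y → y ≤ t → |f y - f t| < ε := by
      intro y hy hys hyt
      refine hδf' y hy ?_
      have hv : varFun g t - varFun g y = varOn g y t := varFun_sub hbv hyt
      rw [abs_sub_comm, abs_of_nonneg (by rw [hv]; exact varOn_nonneg _ _ _), hv]
      exact lt_of_le_of_lt (varOn_mono hbv hys le_rfl) hs₀
    rcases eq_or_lt_of_le ht.2 with htb | htb
    · refine ⟨t - s₀, by linarith, fun y hy hyd => ?_⟩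
      rw [Real.dist_eq]
      have hyt : y ≤ t := htb ▸ hy.2
      refine hleft y hy ?_ hyt
      rw [Real.dist_eq, abs_of_nonpos (by linarith)] at hyd
      linarith
    · have hgr : ContinuousWithinAt g (Ioi t) t := by
        refine hg.mono_of_mem_nhdsWithin (mem_of_superset (Ioo_mem_nhdsGT_of_mem ⟨le_rfl, htb⟩) ?_)
        intro x hx
        exact ⟨ht.1.trans hx.1.le, hx.2.le⟩
      obtain ⟨u, htu, hub, hu'⟩ := keyRight g htb (hbv t b) hgr hδf
      refine ⟨min (t - s₀) (u - t), lt_min (by linarith) (by linarith), fun y hy hyd => ?_⟩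
      rw [Real.dist_eq]
      rcases le_or_gt y t with hyt | hyt
      · refine hleft y hy ?_ hyt
        have h1 := min_le_left (t - s₀) (u - t)
        rw [Real.dist_eq, abs_of_nonpos (by linarith)] at hyd
        linarith
      · refine hδf' y hy ?_
        have hyu : y ≤ u := by
          have h1 := min_le_right (t - s₀) (u - t)
          rw [Real.dist_eq, abs_of_nonneg (by linarith)] at hyd
          linarith
        have hv : varFun g y - varFun g t = varOn g t y := varFun_sub hbv hyt.le
        rw [abs_of_nonneg (by rw [hv]; exact varOn_nonneg _ _ _), hv]
        exact lt_of_le_of_lt (varOn_mono hbv le_rfl hyu) hu'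
  · -- constancy
    intro u v huv hconst x hx
    by_contra hne
    have hxu : u ≤ x := hx.1
    have hzero : eVariationOn g (Icc u x) = 0 := by
      rw [eVariationOn.eq_zero_iff]
      intro p hp q hq
      have hp' : g p = g u := hconst p ⟨hp.1, hp.2.trans hx.2⟩
      have hq' : g q = g u := hconst q ⟨hq.1, hq.2.trans hx.2⟩
      rw [hp', hq', edist_self]
    have hvf : varFun g x - varFun g u = 0 := by
      rw [varFun_sub hbv hxu]
      unfold varOn
      rw [hzero]
      simp
    have hu' : u ∈ Icc a b := huv ⟨le_rfl, hxu.trans hx.2⟩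
    obtain ⟨δ, hδ, hδ'⟩ := hf u hu' |f x - f u| (abs_pos.2 (sub_ne_zero.2 hne))
    have := hδ' x (huv hx) (by rw [hvf]; simpa using hδ)
    exact lt_irrefl _ this
end

section
/- Every g-absolutely continuous function F : [a,b] → ℝ is left-continuous and of bounded variation on [a,b]. -/
open Set Filter MeasureTheory Topology
open scoped Classical

section StmtEightAux

lemma evar_Icc_add (f : ℝ → ℝ) {x y z : ℝ} (hxy : x ≤ y) (hyz : y ≤ z) :
    eVariationOn f (Icc x y) + eVariationOn f (Icc y z) = eVariationOn f (Icc x z) := by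
  have h := eVariationOn.Icc_add_Icc f (s := Icc x z) hxy hyz ⟨hxy, hyz⟩
  rwa [inter_eq_self_of_subset_right (Icc_subset_Icc_right hyz),
    inter_eq_self_of_subset_right (Icc_subset_Icc_left hxy), inter_self] at h

lemma varOn_nonneg_s8 (g : ℝ → ℝ) (x y : ℝ) : 0 ≤ varOn g x y := ENNReal.toReal_nonneg

lemma varOn_self (g : ℝ → ℝ) (x : ℝ) : varOn g x x = 0 := by
  simp [varOn, Icc_self, eVariationOn.subsingleton g (subsingleton_singleton)]

lemma varOn_add_s8 {g : ℝ → ℝ} (hbv : LocBV g) {x y z : ℝ} (hxy : x ≤ y) (hyz : y ≤ z) :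
    varOn g x y + varOn g y z = varOn g x z := by
  rw [varOn, varOn, varOn, ← evar_Icc_add g hxy hyz, ENNReal.toReal_add (hbv x y) (hbv y z)]

lemma varOn_mono_s8 {g : ℝ → ℝ} (hbv : LocBV g) {x x' y y' : ℝ} (hx : x' ≤ x) (hy : y ≤ y') :
    varOn g x y ≤ varOn g x' y' :=
  ENNReal.toReal_mono (hbv x' y') (eVariationOn.mono g (Icc_subset_Icc hx hy))

lemma varOn_lt_iff {g : ℝ → ℝ} (hbv : LocBV g) {x y c : ℝ} :
    varOn g x y < c ↔ eVariationOn g (Icc x y) < ENNReal.ofReal c :=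
  (ENNReal.lt_ofReal_iff_toReal_lt (hbv x y)).symm

lemma varOn_telescope {g : ℝ → ℝ} (hbv : LocBV g) {u : ℕ → ℝ} (hu : Monotone u) (n : ℕ) :
    ∑ i ∈ Finset.range n, varOn g (u i) (u (i + 1)) = varOn g (u 0) (u n) := by
  induction n with
  | zero => simp [varOn_self]
  | succ n ih =>
      rw [Finset.sum_range_succ, ih, varOn_add_s8 hbv (hu (Nat.zero_le n)) (hu (Nat.le_succ n))]

/-- Key lemma: if `g` is left continuous at `t` and of locally bounded variation, the
variation of `g` on `[s, t]` can be made arbitrarily small by taking `s < t` close to `t`. -/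
lemma left_var_small {g : ℝ → ℝ} (hbv : LocBV g) {t : ℝ}
    (hlc : ContinuousWithinAt g (Iio t) t) {ε : ℝ} (hε : 0 < ε) {lo : ℝ} (hlo : lo < t) :
    ∃ s, lo ≤ s ∧ s < t ∧ varOn g s t < ε := by
  obtain ⟨η, hη, hgη⟩ := Metric.continuousWithinAt_iff.1 hlc (ε / 4) (by linarith)
  set Ve := eVariationOn g (Icc lo t) with hVe
  have hVetop : Ve ≠ ⊤ := hbv lo t
  by_cases hbig : Ve < ENNReal.ofReal (ε / 2)
  · refine ⟨max lo (t - 1), le_max_left _ _, max_lt hlo (by linarith), ?_⟩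
    rw [varOn_lt_iff hbv]
    refine lt_of_le_of_lt (le_trans (eVariationOn.mono g
      (Icc_subset_Icc (le_max_left _ _) le_rfl)) hbig.le) ?_
    exact ENNReal.ofReal_lt_ofReal_iff_of_nonneg (by linarith) |>.2 (by linarith)
  push_neg at hbig
  have hVpos : Ve ≠ 0 := by
    intro h0
    rw [h0] at hbig
    simp only [nonpos_iff_eq_zero, ENNReal.ofReal_eq_zero] at hbig
    linarith
  have hsub : Ve - ENNReal.ofReal (ε / 4) < Ve :=
    ENNReal.sub_lt_self hVetop hVpos (by simp [ENNReal.ofReal_eq_zero]; linarith)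
  rw [hVe, eVariationOn, lt_iSup_iff] at hsub
  obtain ⟨⟨n, u, hu, us⟩, hsum⟩ := hsub
  -- Ve < Σ old + ε/4
  have hVlt : Ve < (∑ i ∈ Finset.range n, edist (g (u (i + 1))) (g (u i)))
      + ENNReal.ofReal (ε / 4) := by
    calc Ve ≤ Ve - ENNReal.ofReal (ε / 4) + ENNReal.ofReal (ε / 4) := le_tsub_add
    _ < _ := ENNReal.add_lt_add_right ENNReal.ofReal_ne_top hsum
  -- define the cut point s
  set f0 : ℝ := max lo (t - η / 2) with hf0
  have hf0t : f0 < t := max_lt hlo (by linarith)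
  set P : Finset ℝ := insert f0 (((Finset.range (n + 1)).image u).filter (· < t)) with hP
  have hPne : P.Nonempty := ⟨f0, Finset.mem_insert_self _ _⟩
  set s := P.max' hPne with hs
  have hslt : s < t := by
    show P.max' hPne < t
    rcases Finset.mem_insert.1 (P.max'_mem hPne) with h | h
    · rw [h]; exact hf0t
    · exact (Finset.mem_filter.1 h).2
  have hf0s : f0 ≤ s := P.le_max' f0 (Finset.mem_insert_self _ _)
  have hlos : lo ≤ s := le_trans (le_max_left _ _) hf0s
  have hstη : t - η < s := lt_of_lt_of_le (by
    calc t - η < t - η / 2 := by linarith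
    _ ≤ f0 := le_max_right _ _) hf0s
  have hus : ∀ i, i ≤ n → u i < t → u i ≤ s := by
    intro i hi hut
    refine P.le_max' _ ?_
    refine Finset.mem_insert_of_mem (Finset.mem_filter.2 ⟨Finset.mem_image_of_mem u ?_, hut⟩)
    exact Finset.mem_range.2 (Nat.lt_succ_of_le hi)
  -- distance bound at s
  have hgs : edist (g t) (g s) ≤ ENNReal.ofReal (ε / 4) := by
    have : dist (g s) (g t) < ε / 4 := hgη hslt (by rw [Real.dist_eq, abs_of_neg (by linarith)]; linarith)
    rw [edist_comm, edist_dist]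
    exact ENNReal.ofReal_le_ofReal this.le
  -- truncated sequence
  set u' : ℕ → ℝ := fun i => min (u i) s with hu'
  have hu'mono : Monotone u' := fun i j hij => min_le_min (hu hij) le_rfl
  have hu'mem : ∀ i, u' i ∈ Icc lo s := fun i => ⟨le_min (us i).1 hlos, min_le_right _ _⟩
  have hterm : ∀ i ∈ Finset.range n, edist (g (u (i + 1))) (g (u i)) ≤
      edist (g (u' (i + 1))) (g (u' i)) +
      (if u i ≤ s ∧ s < u (i + 1) then ENNReal.ofReal (ε / 4) else 0) := by
    intro i hi
    have hin : i + 1 ≤ n := Finset.mem_range.1 hi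
    by_cases h1 : u (i + 1) ≤ s
    · have h2 : u i ≤ s := le_trans (hu (Nat.le_succ i)) h1
      simp [hu', min_eq_left h1, min_eq_left h2, h1.not_gt]
    push_neg at h1
    by_cases h3 : u i ≤ s
    · have hut : u (i + 1) = t := by
        rcases lt_or_eq_of_le (us (i + 1)).2 with h | h
        · exact absurd (hus (i + 1) hin h) h1.not_ge
        · exact h
      have e1 : u' (i + 1) = s := min_eq_right h1.le
      have e2 : u' i = u i := min_eq_left h3
      rw [if_pos ⟨h3, h1⟩, e1, e2, hut]
      calc edist (g t) (g (u i)) ≤ edist (g t) (g s) + edist (g s) (g (u i)) := edist_triangle _ _ _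
      _ = edist (g s) (g (u i)) + edist (g t) (g s) := add_comm _ _
      _ ≤ _ := add_le_add le_rfl hgs
    · push_neg at h3
      have hut1 : u i = t := by
        rcases lt_or_eq_of_le (us i).2 with h | h
        · exact absurd (hus i (le_trans (Nat.le_succ i) hin) h) h3.not_ge
        · exact h
      have hut2 : u (i + 1) = t := le_antisymm (us (i + 1)).2 (hut1 ▸ hu (Nat.le_succ i))
      rw [hut1, hut2]
      simp
  have hcross : ∀ i ∈ (Finset.range n).filter (fun i => u i ≤ s ∧ s < u (i + 1)),
      ∀ j ∈ (Finset.range n).filter (fun i => u i ≤ s ∧ s < u (i + 1)), i = j := by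
    intro i hi j hj
    simp only [Finset.mem_filter] at hi hj
    by_contra hne
    rcases Nat.lt_or_ge i j with h | h
    · exact absurd (le_trans (hu (Nat.succ_le_of_lt h)) hj.2.1) hi.2.2.not_ge
    · rcases Nat.lt_or_ge j i with h' | h'
      · exact absurd (le_trans (hu (Nat.succ_le_of_lt h')) hi.2.1) hj.2.2.not_ge
      · exact hne (le_antisymm h' h)
  have hcrosssum : (∑ i ∈ Finset.range n,
      (if u i ≤ s ∧ s < u (i + 1) then ENNReal.ofReal (ε / 4) else 0)) ≤ ENNReal.ofReal (ε / 4) := by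
    rw [← Finset.sum_filter]
    by_cases hfe : ((Finset.range n).filter (fun i => u i ≤ s ∧ s < u (i + 1))).Nonempty
    · obtain ⟨i0, hi0⟩ := hfe
      have hsubset : (Finset.range n).filter (fun i => u i ≤ s ∧ s < u (i + 1)) ⊆ {i0} := by
        intro j hj
        simp [hcross j hj i0 hi0]
      calc _ ≤ ∑ _i ∈ ({i0} : Finset ℕ), ENNReal.ofReal (ε / 4) :=
            Finset.sum_le_sum_of_subset hsubset
      _ = ENNReal.ofReal (ε / 4) := by simp
    · rw [Finset.not_nonempty_iff_eq_empty.1 hfe]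
      simp
  have hnewle : (∑ i ∈ Finset.range n, edist (g (u' (i + 1))) (g (u' i)))
      ≤ eVariationOn g (Icc lo s) := eVariationOn.sum_le (f := g) (n := n) hu'mono hu'mem
  have hmain : Ve < eVariationOn g (Icc lo s) + ENNReal.ofReal (ε / 2) := by
    calc Ve < (∑ i ∈ Finset.range n, edist (g (u (i + 1))) (g (u i)))
        + ENNReal.ofReal (ε / 4) := hVlt
    _ ≤ (∑ i ∈ Finset.range n, (edist (g (u' (i + 1))) (g (u' i)) +
          (if u i ≤ s ∧ s < u (i + 1) then ENNReal.ofReal (ε / 4) else 0)))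
        + ENNReal.ofReal (ε / 4) := by
        exact add_le_add (Finset.sum_le_sum hterm) le_rfl
    _ = ((∑ i ∈ Finset.range n, edist (g (u' (i + 1))) (g (u' i))) +
          ∑ i ∈ Finset.range n, (if u i ≤ s ∧ s < u (i + 1) then ENNReal.ofReal (ε / 4) else 0))
        + ENNReal.ofReal (ε / 4) := by rw [Finset.sum_add_distrib]
    _ ≤ (eVariationOn g (Icc lo s) + ENNReal.ofReal (ε / 4)) + ENNReal.ofReal (ε / 4) :=
        add_le_add (add_le_add hnewle hcrosssum) le_rfl
    _ = eVariationOn g (Icc lo s) + (ENNReal.ofReal (ε / 4) + ENNReal.ofReal (ε / 4)) := by ring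
    _ = eVariationOn g (Icc lo s) + ENNReal.ofReal (ε / 2) := by
        rw [← ENNReal.ofReal_add (by linarith) (by linarith)]; congr 1; ring
  refine ⟨s, hlos, hslt, ?_⟩
  rw [varOn_lt_iff hbv]
  have hsplit : eVariationOn g (Icc lo s) + eVariationOn g (Icc s t) = Ve :=
    evar_Icc_add g hlos hslt.le
  have hW : eVariationOn g (Icc lo s) ≠ ⊤ := hbv lo s
  rw [← hsplit] at hmain
  have := (ENNReal.add_lt_add_iff_left hW).1 hmain
  exact lt_of_lt_of_le this (ENNReal.ofReal_le_ofReal (by linarith))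

section GacLemmas
variable {g F : ℝ → ℝ} {a b δ : ℝ}

/-- From the `GAC` property with `ε = 1`, a bound on partition sums of `F`. -/
lemma gac_sum
    (hgac : ∀ n : ℕ, ∀ c d : ℕ → ℝ,
      (∀ i < n, a ≤ c i ∧ c i < d i ∧ d i ≤ b) →
      (∀ i < n, ∀ j < n, i ≠ j → Disjoint (Set.Ioo (c i) (d i)) (Set.Ioo (c j) (d j))) →
      (∑ i ∈ Finset.range n, varOn g (c i) (d i)) < δ →
      (∑ i ∈ Finset.range n, |F (d i) - F (c i)|) < 1)
    {n : ℕ} {u : ℕ → ℝ} (hu : Monotone u) (hmem : ∀ i, u i ∈ Set.Icc a b)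
    (hvar : (∑ i ∈ Finset.range n, varOn g (u i) (u (i + 1))) < δ) :
    (∑ i ∈ Finset.range n, |F (u (i + 1)) - F (u i)|) < 1 := by
  set J : Finset ℕ := (Finset.range n).filter (fun i => u i < u (i + 1)) with hJ
  set k := J.card with hk
  set e : Fin k ↪o ℕ := J.orderEmbOfFin rfl with he
  have heJ : ∀ i : Fin k, e i ∈ J := fun i => J.orderEmbOfFin_mem rfl i
  set c : ℕ → ℝ := fun i => if h : i < k then u (e ⟨i, h⟩) else 0 with hc
  set d : ℕ → ℝ := fun i => if h : i < k then u (e ⟨i, h⟩ + 1) else 1 with hd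
  have hcd : ∀ i (h : i < k), c i = u (e ⟨i, h⟩) ∧ d i = u (e ⟨i, h⟩ + 1) := by
    intro i h; constructor <;> simp [hc, hd, h]
  have hJsum : ∀ f : ℝ → ℝ → ℝ, (∑ i ∈ Finset.range k, f (c i) (d i))
      = ∑ j ∈ J, f (u j) (u (j + 1)) := by
    intro f
    rw [← Fin.sum_univ_eq_sum_range (fun i => f (c i) (d i)) k]
    refine Finset.sum_bij (fun (i : Fin k) _ => e i) (fun i _ => heJ i)
      (fun i _ j _ hij => e.injective hij) ?_ ?_
    · intro j hjJ
      have : j ∈ Set.range e := by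
        rw [Finset.range_orderEmbOfFin]
        exact hjJ
      obtain ⟨i, hi⟩ := this
      exact ⟨i, Finset.mem_univ i, hi⟩
    · intro i _
      rw [(hcd i i.2).1, (hcd i i.2).2]
  have key : (∑ i ∈ Finset.range k, |F (d i) - F (c i)|) < 1 := by
    refine hgac k c d ?_ ?_ ?_
    · intro i hi
      rw [(hcd i hi).1, (hcd i hi).2]
      have := heJ ⟨i, hi⟩
      rw [hJ, Finset.mem_filter] at this
      exact ⟨(hmem _).1, this.2, (hmem _).2⟩
    · intro i hi j hj hij
      rw [(hcd i hi).1, (hcd i hi).2, (hcd j hj).1, (hcd j hj).2]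
      rcases Nat.lt_or_ge (e ⟨i, hi⟩) (e ⟨j, hj⟩) with h | h
      · have hle : u (e ⟨i, hi⟩ + 1) ≤ u (e ⟨j, hj⟩) := hu (Nat.succ_le_of_lt h)
        rw [Set.disjoint_left]
        intro x hx hx'
        exact absurd (lt_of_le_of_lt hle hx'.1) (lt_of_lt_of_le hx.2 le_rfl).not_gt.elim
      · have hne : e ⟨i, hi⟩ ≠ e ⟨j, hj⟩ := by
          intro hcon
          exact hij (congrArg Fin.val (e.injective hcon))
        have h' : e ⟨j, hj⟩ < e ⟨i, hi⟩ := lt_of_le_of_ne h (Ne.symm hne)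
        have hle : u (e ⟨j, hj⟩ + 1) ≤ u (e ⟨i, hi⟩) := hu (Nat.succ_le_of_lt h')
        rw [Set.disjoint_right]
        intro x hx hx'
        exact absurd (lt_of_le_of_lt hle hx'.1) hx.2.not_gt.elim
    · rw [hJsum (fun x y => varOn g x y)]
      refine lt_of_le_of_lt ?_ hvar
      refine Finset.sum_le_sum_of_subset_of_nonneg (Finset.filter_subset _ _) ?_
      intro i _ _
      exact varOn_nonneg_s8 g _ _
  rw [hJsum (fun x y => |F y - F x|)] at key
  refine lt_of_le_of_lt (le_of_eq ?_) key
  refine (Finset.sum_filter_of_ne ?_).symm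
  intro i _ hne
  by_contra hlt
  push_neg at hlt
  have : u i = u (i + 1) := le_antisymm (hu (Nat.le_succ i)) hlt
  rw [this] at hne
  simp at hne

lemma edist_sum_eq (F : ℝ → ℝ) (u : ℕ → ℝ) (n : ℕ) :
    (∑ i ∈ Finset.range n, edist (F (u (i + 1))) (F (u i)))
      = ENNReal.ofReal (∑ i ∈ Finset.range n, |F (u (i + 1)) - F (u i)|) := by
  rw [ENNReal.ofReal_sum_of_nonneg (fun i _ => abs_nonneg _)]
  refine Finset.sum_congr rfl fun i _ => ?_
  rw [edist_dist, Real.dist_eq]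

lemma block_small (hbv : LocBV g)
    (hgac : ∀ n : ℕ, ∀ c d : ℕ → ℝ,
      (∀ i < n, a ≤ c i ∧ c i < d i ∧ d i ≤ b) →
      (∀ i < n, ∀ j < n, i ≠ j → Disjoint (Set.Ioo (c i) (d i)) (Set.Ioo (c j) (d j))) →
      (∑ i ∈ Finset.range n, varOn g (c i) (d i)) < δ →
      (∑ i ∈ Finset.range n, |F (d i) - F (c i)|) < 1)
    {c d : ℝ} (hac : a ≤ c) (hcd : c ≤ d) (hdb : d ≤ b) (hsmall : varOn g c d < δ) :
    eVariationOn F (Icc c d) ≤ 1 := by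
  refine iSup_le ?_
  rintro ⟨n, u, hu, us⟩
  have hmem : ∀ i, u i ∈ Icc a b := fun i => ⟨le_trans hac (us i).1, le_trans (us i).2 hdb⟩
  have hvar : (∑ i ∈ Finset.range n, varOn g (u i) (u (i + 1))) < δ := by
    rw [varOn_telescope hbv hu n]
    exact lt_of_le_of_lt (varOn_mono_s8 hbv (us 0).1 (us n).2) hsmall
  have h := gac_sum hgac hu hmem hvar
  rw [edist_sum_eq]
  calc ENNReal.ofReal (∑ i ∈ Finset.range n, |F (u (i + 1)) - F (u i)|)
      ≤ ENNReal.ofReal 1 := ENNReal.ofReal_le_ofReal h.le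
  _ = 1 := ENNReal.ofReal_one

lemma block_jump (hbv : LocBV g) (hδ : 0 < δ)
    (hgac : ∀ n : ℕ, ∀ c d : ℕ → ℝ,
      (∀ i < n, a ≤ c i ∧ c i < d i ∧ d i ≤ b) →
      (∀ i < n, ∀ j < n, i ≠ j → Disjoint (Set.Ioo (c i) (d i)) (Set.Ioo (c j) (d j))) →
      (∑ i ∈ Finset.range n, varOn g (c i) (d i)) < δ →
      (∑ i ∈ Finset.range n, |F (d i) - F (c i)|) < 1)
    {c d : ℝ} (hac : a ≤ c) (hcd : c ≤ d) (hdb : d ≤ b)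
    (hsmall : ∀ x, c < x → x ≤ d → varOn g x d < δ) :
    eVariationOn F (Icc c d) ≤ ENNReal.ofReal (2 + |F d - F c|) := by
  refine iSup_le ?_
  rintro ⟨n, u, hu, us⟩
  dsimp only
  have hmem : ∀ i, u i ∈ Icc a b := fun i => ⟨le_trans hac (us i).1, le_trans (us i).2 hdb⟩
  rw [edist_sum_eq]
  refine ENNReal.ofReal_le_ofReal ?_
  by_cases hex : ∃ i, i < n ∧ c < u (i + 1)
  · set i₀ := Nat.find hex with hi₀
    obtain ⟨hi₀n, hi₀c⟩ := Nat.find_spec hex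
    have hi₀n' : i₀ + 1 ≤ n := Nat.succ_le_of_lt hi₀n
    -- terms before i₀ vanish
    have hzero : ∀ i < i₀, |F (u (i + 1)) - F (u i)| = 0 := by
      intro i hi
      have hin : i < n := lt_of_lt_of_le hi (Nat.le_of_succ_le hi₀n')
      have hle : u (i + 1) ≤ c := not_lt.1 fun hc => Nat.find_min hex hi ⟨hin, hc⟩
      have e1 : u (i + 1) = c := le_antisymm hle (us (i + 1)).1
      have e2 : u i = c := le_antisymm (le_trans (hu (Nat.le_succ i)) hle) (us i).1
      rw [e1, e2, sub_self, abs_zero]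
    -- tail sum
    have htail : (∑ i ∈ Finset.Ico (i₀ + 1) n, |F (u (i + 1)) - F (u i)|) < 1 := by
      set v : ℕ → ℝ := fun i => u (i₀ + 1 + i) with hv
      have hvmono : Monotone v := by
        intro i j hij
        exact hu (Nat.add_le_add_left hij (i₀ + 1))
      have hvmem : ∀ i, v i ∈ Icc a b := fun i => hmem _
      have hvvar : (∑ i ∈ Finset.range (n - (i₀ + 1)), varOn g (v i) (v (i + 1))) < δ := by
        rw [varOn_telescope hbv hvmono]
        have hv0 : v 0 = u (i₀ + 1) := by simp [hv]
        have hvn : v (n - (i₀ + 1)) = u n := by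
          show u (i₀ + 1 + (n - (i₀ + 1))) = u n
          rw [Nat.add_sub_cancel' hi₀n']
        rw [hv0, hvn]
        refine lt_of_le_of_lt (varOn_mono_s8 hbv le_rfl (us n).2) (hsmall _ hi₀c (us (i₀ + 1)).2)
      have := gac_sum hgac hvmono hvmem hvvar
      rw [Finset.sum_Ico_eq_sum_range]
      refine lt_of_le_of_lt (le_of_eq ?_) this
      refine Finset.sum_congr rfl fun i _ => ?_
      have e1 : i₀ + 1 + i + 1 = i₀ + 1 + (i + 1) := by omega
      rw [hv]
      simp only []
      rw [e1]
    -- middle term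
    have hmid : |F (u (i₀ + 1)) - F (u i₀)| ≤ 1 + |F d - F c| := by
      by_cases hci : c < u i₀
      · -- pair (u i₀, u (i₀+1))
        set w : ℕ → ℝ := fun i => u (i₀ + min i 1) with hw
        have hwmono : Monotone w := fun i j hij =>
          hu (Nat.add_le_add_left (min_le_min hij le_rfl) i₀)
        have hwmem : ∀ i, w i ∈ Icc a b := fun i => hmem _
        have hwvar : (∑ i ∈ Finset.range 1, varOn g (w i) (w (i + 1))) < δ := by
          rw [Finset.sum_range_one]
          have e0 : w 0 = u i₀ := by simp [hw]
          have e1 : w 1 = u (i₀ + 1) := by simp [hw]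
          rw [e0, e1]
          refine lt_of_le_of_lt (varOn_mono_s8 hbv le_rfl (us (i₀ + 1)).2) (hsmall _ hci (us i₀).2)
        have := gac_sum hgac hwmono hwmem hwvar
        rw [Finset.sum_range_one] at this
        have e0 : w 0 = u i₀ := by simp [hw]
        have e1 : w 1 = u (i₀ + 1) := by simp [hw]
        rw [e0, e1] at this
        have : |F (u (i₀ + 1)) - F (u i₀)| < 1 := this
        have h2 : (0:ℝ) ≤ |F d - F c| := abs_nonneg _
        linarith
      · -- u i₀ = c
        push_neg at hci
        have e2 : u i₀ = c := le_antisymm hci (us i₀).1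
        have hlast : |F (u (i₀ + 1)) - F d| ≤ 1 := by
          rcases eq_or_lt_of_le (us (i₀ + 1)).2 with h | h
          · rw [h, sub_self, abs_zero]; exact zero_le_one
          · set w : ℕ → ℝ := fun i => if i = 0 then u (i₀ + 1) else d with hw
            have hwmono : Monotone w := by
              intro i j hij
              rw [hw]
              by_cases h0 : i = 0
              · by_cases h1 : j = 0
                · simp [h0, h1]
                · simp only [h0, h1, if_true, if_false, if_pos rfl]
                  exact (us (i₀ + 1)).2
              · have h1 : j ≠ 0 := by omega
                simp [h0, h1]
            have hwmem : ∀ i, w i ∈ Icc a b := by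
              intro i
              rw [hw]
              by_cases h0 : i = 0
              · simp only [h0, if_pos rfl]; exact hmem _
              · simp only [h0, if_neg h0]; exact ⟨le_trans hac hcd, hdb⟩
            have hwvar : (∑ i ∈ Finset.range 1, varOn g (w i) (w (i + 1))) < δ := by
              rw [Finset.sum_range_one]
              have e0 : w 0 = u (i₀ + 1) := by simp [hw]
              have e1 : w 1 = d := by simp [hw]
              rw [e0, e1]
              exact hsmall _ hi₀c (us (i₀ + 1)).2
            have h3 := gac_sum hgac hwmono hwmem hwvar
            rw [Finset.sum_range_one] at h3
            have e0 : w 0 = u (i₀ + 1) := by simp [hw]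
            have e1 : w 1 = d := by simp [hw]
            rw [e0, e1] at h3
            rw [abs_sub_comm]
            exact h3.le
        calc |F (u (i₀ + 1)) - F (u i₀)| = |F (u (i₀ + 1)) - F c| := by rw [e2]
        _ ≤ |F (u (i₀ + 1)) - F d| + |F d - F c| := abs_sub_le _ _ _
        _ ≤ 1 + |F d - F c| := by linarith
    -- combine
    have hsplit : (∑ i ∈ Finset.range n, |F (u (i + 1)) - F (u i)|)
        = (∑ i ∈ Finset.range (i₀ + 1), |F (u (i + 1)) - F (u i)|)
          + ∑ i ∈ Finset.Ico (i₀ + 1) n, |F (u (i + 1)) - F (u i)| :=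
      (Finset.sum_range_add_sum_Ico _ hi₀n').symm
    have hhead : (∑ i ∈ Finset.range (i₀ + 1), |F (u (i + 1)) - F (u i)|)
        = |F (u (i₀ + 1)) - F (u i₀)| := by
      rw [Finset.sum_range_succ, Finset.sum_eq_zero (fun i hi => hzero i (Finset.mem_range.1 hi)),
        zero_add]
    rw [hsplit, hhead]
    linarith
  · push_neg at hex
    have : (∑ i ∈ Finset.range n, |F (u (i + 1)) - F (u i)|) = 0 := by
      refine Finset.sum_eq_zero fun i hi => ?_
      have hin := Finset.mem_range.1 hi
      have hle : u (i + 1) ≤ c := hex i hin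
      have e1 : u (i + 1) = c := le_antisymm hle (us (i + 1)).1
      have e2 : u i = c := le_antisymm (le_trans (hu (Nat.le_succ i)) hle) (us i).1
      rw [e1, e2, sub_self, abs_zero]
    rw [this]
    have := abs_nonneg (F d - F c)
    linarith

lemma main_bv (hbv : LocBV g) (hlc : LeftCont g) (hδpos : 0 < δ)
    (hgac : ∀ n : ℕ, ∀ c d : ℕ → ℝ,
      (∀ i < n, a ≤ c i ∧ c i < d i ∧ d i ≤ b) →
      (∀ i < n, ∀ j < n, i ≠ j → Disjoint (Set.Ioo (c i) (d i)) (Set.Ioo (c j) (d j))) →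
      (∑ i ∈ Finset.range n, varOn g (c i) (d i)) < δ →
      (∑ i ∈ Finset.range n, |F (d i) - F (c i)|) < 1) :
    ∀ k : ℕ, ∀ s, a ≤ s → s ≤ b → varOn g s b ≤ k * (δ / 2) →
      eVariationOn F (Icc s b) ≠ ⊤ := by
  intro k
  induction k with
  | zero =>
      intro s has hsb hvar
      have h0 : varOn g s b < δ := by
        have := varOn_nonneg_s8 g s b
        simp only [Nat.cast_zero, zero_mul] at hvar
        linarith
      exact ne_top_of_le_ne_top (by simp) (block_small hbv hgac has hsb le_rfl h0)
  | succ k ih =>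
      intro s has hsb hvar
      by_cases hcase : varOn g s b < δ
      · exact ne_top_of_le_ne_top (by simp) (block_small hbv hgac has hsb le_rfl hcase)
      push_neg at hcase
      set S : Set ℝ := {x | x ∈ Icc s b ∧ varOn g s x ≤ δ / 2} with hS
      have hSne : S.Nonempty := ⟨s, ⟨le_rfl, hsb⟩, by rw [varOn_self]; linarith⟩
      have hSbdd : BddAbove S := ⟨b, fun y hy => hy.1.2⟩
      set c := sSup S with hc
      have hsc : s ≤ c := le_csSup hSbdd ⟨⟨le_rfl, hsb⟩, by rw [varOn_self]; linarith⟩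
      have hcb : c ≤ b := csSup_le hSne fun y hy => hy.1.2
      have hvc : varOn g s c ≤ δ / 2 := by
        by_contra h
        push_neg at h
        have hsc' : s < c := by
          rcases lt_or_eq_of_le hsc with h' | h'
          · exact h'
          · exfalso; rw [← h', varOn_self] at h; linarith
        obtain ⟨x, hsx, hxc, hxvar⟩ :=
          left_var_small hbv (hlc c) (ε := varOn g s c - δ / 2) (by linarith) hsc'
        have hxadd : varOn g s x + varOn g x c = varOn g s c := varOn_add_s8 hbv hsx hxc.le
        have hx2 : δ / 2 < varOn g s x := by linarith
        have hub : ∀ y ∈ S, y ≤ x := by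
          intro y hy
          by_contra hxy
          push_neg at hxy
          have : varOn g s x ≤ varOn g s y := varOn_mono_s8 hbv le_rfl hxy.le
          have := hy.2
          linarith
        have := csSup_le hSne hub
        rw [← hc] at this
        linarith
      have hcb' : c < b := by
        rcases lt_or_eq_of_le hcb with h' | h'
        · exact h'
        · exfalso; rw [h'] at hvc; linarith
      have key : ∀ x, c < x → x ≤ b → δ / 2 < varOn g s x := by
        intro x hcx hxb
        by_contra h
        push_neg at h
        have hxS : x ∈ S := ⟨⟨le_trans hsc hcx.le, hxb⟩, h⟩
        have : x ≤ c := le_csSup hSbdd hxS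
        linarith
      -- choose c'
      set T : Set ℝ := (fun x => varOn g c x) '' Ioc c b with hT
      have hTne : T.Nonempty := ⟨varOn g c b, b, ⟨hcb', le_rfl⟩, rfl⟩
      have hTbdd : BddBelow T := ⟨0, by rintro v ⟨x, _, rfl⟩; exact varOn_nonneg_s8 g c x⟩
      set m := sInf T with hm
      obtain ⟨v, hvmem, hvlt⟩ := exists_lt_of_csInf_lt hTne (show sInf T < m + δ / 2 by
        rw [← hm]; linarith)
      obtain ⟨c', hc'mem, rfl⟩ := hvmem
      have hcc' : c < c' := hc'mem.1
      have hc'b : c' ≤ b := hc'mem.2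
      have hsmall' : ∀ x, c < x → x ≤ c' → varOn g x c' < δ := by
        intro x hcx hxc'
        have h1 : varOn g c x + varOn g x c' = varOn g c c' := varOn_add_s8 hbv hcx.le hxc'
        have h2 : m ≤ varOn g c x := csInf_le hTbdd ⟨x, ⟨hcx, hxc'.trans hc'b⟩, rfl⟩
        linarith
      -- apply IH at c'
      have hkey : δ / 2 < varOn g s c' := key c' hcc' hc'b
      have hadd : varOn g s c' + varOn g c' b = varOn g s b :=
        varOn_add_s8 hbv (hsc.trans hcc'.le) hc'b
      have hih : varOn g c' b ≤ k * (δ / 2) := by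
        have : (↑(k + 1) : ℝ) * (δ / 2) = k * (δ / 2) + δ / 2 := by push_cast; ring
        rw [this] at hvar
        linarith
      have ne3 : eVariationOn F (Icc c' b) ≠ ⊤ :=
        ih c' (has.trans (hsc.trans hcc'.le)) hc'b hih
      have ne1 : eVariationOn F (Icc s c) ≠ ⊤ :=
        ne_top_of_le_ne_top (by simp)
          (block_small hbv hgac has hsc hcb (by linarith))
      have ne2 : eVariationOn F (Icc c c') ≠ ⊤ :=
        ne_top_of_le_ne_top ENNReal.ofReal_ne_top
          (block_jump hbv hδpos hgac (has.trans hsc) hcc'.le (hc'b) hsmall')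
      have e1 : eVariationOn F (Icc s c') = eVariationOn F (Icc s c) + eVariationOn F (Icc c c') :=
        (evar_Icc_add F hsc hcc'.le).symm
      have e2 : eVariationOn F (Icc s b) = eVariationOn F (Icc s c') + eVariationOn F (Icc c' b) :=
        (evar_Icc_add F (hsc.trans hcc'.le) hc'b).symm
      rw [e2, e1]
      exact ENNReal.add_ne_top.2 ⟨ENNReal.add_ne_top.2 ⟨ne1, ne2⟩, ne3⟩

end GacLemmas

end StmtEightAux

/-- Every `g`-absolutely continuous function is left-continuous and of bounded
variation on `[a,b]`. -/
theorem stmt8 (a b : ℝ) (hab : a < b) (g F : ℝ → ℝ) (hlc : LeftCont g) (hbv : LocBV g)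
    (hF : GAC g F a b) :
    (∀ t ∈ Set.Ioc a b, ContinuousWithinAt F (Set.Icc a b ∩ Set.Iio t) t) ∧
    BoundedVariationOn F (Set.Icc a b) := by
  obtain ⟨δ1, hδ1pos, hgac1⟩ := hF 1 one_pos
  constructor
  · intro t ht
    rw [Metric.continuousWithinAt_iff]
    intro ε hε
    obtain ⟨δ, hδpos, hgac⟩ := hF ε hε
    obtain ⟨s, hs1, hs2, hs3⟩ := left_var_small hbv (hlc t) hδpos ht.1
    refine ⟨t - s, by linarith, ?_⟩
    intro x hx hdist
    have hxt : x < t := hx.2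
    have hsx : s < x := by
      rw [Real.dist_eq, abs_of_neg (by linarith)] at hdist
      linarith
    have h1 : ∀ i < 1, a ≤ (fun _ : ℕ => x) i ∧ (fun _ : ℕ => x) i < (fun _ : ℕ => t) i ∧
        (fun _ : ℕ => t) i ≤ b := fun i _ => ⟨hx.1.1, hxt, ht.2⟩
    have h2 : ∀ i < 1, ∀ j < 1, i ≠ j →
        Disjoint (Set.Ioo ((fun _ : ℕ => x) i) ((fun _ : ℕ => t) i))
          (Set.Ioo ((fun _ : ℕ => x) j) ((fun _ : ℕ => t) j)) := by
      intro i hi j hj hij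
      exact absurd (by omega) hij
    have h3 : (∑ i ∈ Finset.range 1, varOn g ((fun _ : ℕ => x) i) ((fun _ : ℕ => t) i)) < δ := by
      rw [Finset.sum_range_one]
      exact lt_of_le_of_lt (varOn_mono_s8 hbv hsx.le le_rfl) hs3
    have h4 := hgac 1 (fun _ => x) (fun _ => t) h1 h2 h3
    rw [Finset.sum_range_one] at h4
    rw [Real.dist_eq, abs_sub_comm]
    exact h4
  · obtain ⟨k, hk⟩ := exists_nat_ge (varOn g a b / (δ1 / 2))
    have hvar : varOn g a b ≤ k * (δ1 / 2) := by
      rw [div_le_iff₀ (by linarith)] at hk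
      linarith
    exact main_bv hbv hlc hδ1pos hgac1 k a le_rfl hab.le hvar
end

section
/- Let g ∈ BV_loc^lc(ℝ,ℝ) and f ∈ L¹_g([a,b), ℝ). Then the function F(t) := ∫_{[a,t)} f dμ_g is g-absolutely continuous on [a,b]. -/
open Set Filter MeasureTheory Topology
open scoped Classical

open scoped ENNReal NNReal in
lemma sInt_abs_le' (μ : MeasureTheory.SignedMeasure ℝ) (f : ℝ → ℝ) (s : Set ℝ)
    (hfin : ∫⁻ x in s, ‖f x‖₊ ∂μ.totalVariation ≠ ∞) :
    |sInt μ f s| ≤ (∫⁻ x in s, ‖f x‖₊ ∂μ.totalVariation).toReal := by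
  set P := μ.toJordanDecomposition.posPart
  set N := μ.toJordanDecomposition.negPart
  have htv : μ.totalVariation = P + N := rfl
  have hsum : ∫⁻ x in s, ‖f x‖₊ ∂μ.totalVariation
      = (∫⁻ x in s, ‖f x‖₊ ∂P) + (∫⁻ x in s, ‖f x‖₊ ∂N) := by
    rw [htv, MeasureTheory.Measure.restrict_add, MeasureTheory.lintegral_add_measure]
  rw [hsum] at hfin ⊢
  have hP : ∫⁻ x in s, ‖f x‖₊ ∂P ≠ ∞ := fun h => hfin (by simp [h])
  have hN : ∫⁻ x in s, ‖f x‖₊ ∂N ≠ ∞ := fun h => hfin (by simp [h])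
  have h1 : |∫ x in s, f x ∂P| ≤ (∫⁻ x in s, ‖f x‖₊ ∂P).toReal := by
    have := MeasureTheory.norm_integral_le_lintegral_norm (μ := P.restrict s) f
    simp only [← ofReal_norm, ← enorm_eq_nnnorm]
    simpa [Real.norm_eq_abs] using this
  have h2 : |∫ x in s, f x ∂N| ≤ (∫⁻ x in s, ‖f x‖₊ ∂N).toReal := by
    have := MeasureTheory.norm_integral_le_lintegral_norm (μ := N.restrict s) f
    simp only [← ofReal_norm, ← enorm_eq_nnnorm]
    simpa [Real.norm_eq_abs] using this
  calc |sInt μ f s| ≤ |∫ x in s, f x ∂P| + |∫ x in s, f x ∂N| := by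
        rw [sInt]
        simpa [Real.norm_eq_abs] using norm_sub_le (∫ x in s, f x ∂P) (∫ x in s, f x ∂N)
    _ ≤ (∫⁻ x in s, ‖f x‖₊ ∂P).toReal + (∫⁻ x in s, ‖f x‖₊ ∂N).toReal := add_le_add h1 h2
    _ = ((∫⁻ x in s, ‖f x‖₊ ∂P) + (∫⁻ x in s, ‖f x‖₊ ∂N)).toReal :=
        (ENNReal.toReal_add hP hN).symm

/-- The indefinite Lebesgue–Stieltjes integral of a `g`-integrable function is
`g`-absolutely continuous. -/
theorem stmt10 (a b : ℝ) (hab : a < b) (g f : ℝ → ℝ) (hlc : LeftCont g) (hbv : LocBV g)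
    (μ : MeasureTheory.SignedMeasure ℝ)
    (hμ : ∀ s t : ℝ, s ∈ Set.Icc a b → t ∈ Set.Icc a b → s ≤ t →
      μ (Set.Ico s t) = g t - g s)
    (hvar : ∀ s t : ℝ, s ∈ Set.Icc a b → t ∈ Set.Icc a b → s ≤ t →
      μ.totalVariation (Set.Ico s t) = ENNReal.ofReal (varOn g s t))
    (hf : MeasureTheory.IntegrableOn f (Set.Ico a b) μ.totalVariation) :
    GAC g (fun t => sInt μ f (Set.Ico a t)) a b := by
  intro ε hε
  set ν := μ.totalVariation with hν
  set P := μ.toJordanDecomposition.posPart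
  set N := μ.toJordanDecomposition.negPart
  have htv : ν = P + N := rfl
  have hfin : ∫⁻ x in Set.Ico a b, ‖f x‖₊ ∂ν ≠ (⊤ : ENNReal) := ne_of_lt hf.2
  obtain ⟨δ', hδ'pos, hδ'⟩ := MeasureTheory.exists_pos_setLIntegral_lt_of_measure_lt
    (μ := ν.restrict (Set.Ico a b)) (f := fun x => (‖f x‖₊ : ENNReal)) hfin
    (ENNReal.ofReal_pos.2 hε).ne'
  obtain ⟨δ, hδpos, hδlt⟩ : ∃ δ : ℝ, 0 < δ ∧ ENNReal.ofReal δ < δ' := by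
    rcases eq_or_ne δ' (⊤ : ENNReal) with h | h
    · exact ⟨1, one_pos, by simp [h, ENNReal.ofReal_lt_top]⟩
    · have ht : 0 < δ'.toReal := ENNReal.toReal_pos hδ'pos.ne' h
      exact ⟨δ'.toReal / 2, by positivity,
        (ENNReal.ofReal_lt_iff_lt_toReal (by positivity) h).2 (by linarith)⟩
  refine ⟨δ, hδpos, ?_⟩
  intro n c d hcd hdisj hsumlt
  set s : ℕ → Set ℝ := fun i => Set.Ico (c i) (d i) with hs
  have hsub : ∀ i ∈ Finset.range n, s i ⊆ Set.Ico a b := by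
    intro i hi x hx
    have h := hcd i (Finset.mem_range.1 hi)
    exact ⟨le_trans h.1 hx.1, lt_of_lt_of_le hx.2 h.2.2⟩
  have hmeas : ∀ i, MeasurableSet (s i) := fun i => measurableSet_Ico
  set U := ⋃ i ∈ Finset.range n, s i with hU
  have hUsub : U ⊆ Set.Ico a b := Set.iUnion₂_subset hsub
  have hUm : MeasurableSet U := Finset.measurableSet_biUnion _ fun i _ => hmeas i
  -- the measure bound
  have hνs : ∀ i ∈ Finset.range n, ν (s i) = ENNReal.ofReal (varOn g (c i) (d i)) := by
    intro i hi
    have h := hcd i (Finset.mem_range.1 hi)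
    exact hvar (c i) (d i) ⟨h.1, le_trans h.2.1.le h.2.2⟩
      ⟨le_trans h.1 h.2.1.le, h.2.2⟩ h.2.1.le
  have hνU : (ν.restrict (Set.Ico a b)) U < δ' := by
    calc (ν.restrict (Set.Ico a b)) U ≤ ν U :=
          MeasureTheory.Measure.restrict_apply_le _ U
      _ ≤ ∑ i ∈ Finset.range n, ν (s i) := MeasureTheory.measure_biUnion_finset_le _ _
      _ = ∑ i ∈ Finset.range n, ENNReal.ofReal (varOn g (c i) (d i)) :=
          Finset.sum_congr rfl hνs
      _ = ENNReal.ofReal (∑ i ∈ Finset.range n, varOn g (c i) (d i)) :=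
          (ENNReal.ofReal_sum_of_nonneg fun i _ => ENNReal.toReal_nonneg).symm
      _ < ENNReal.ofReal δ := (ENNReal.ofReal_lt_ofReal_iff hδpos).2 hsumlt
      _ < δ' := hδlt
  have hUint : ∫⁻ x in U, ‖f x‖₊ ∂ν < ENNReal.ofReal ε := by
    have := hδ' U hνU
    rwa [MeasureTheory.Measure.restrict_restrict hUm,
      Set.inter_eq_self_of_subset_left hUsub] at this
  -- pairwise disjointness of the `Ico`s
  have hpd : Set.PairwiseDisjoint (↑(Finset.range n)) s := by
    intro i hi j hj hij
    have h := hdisj i (Finset.mem_range.1 hi) j (Finset.mem_range.1 hj) hij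
    rw [Set.Ioo_disjoint_Ioo] at h
    simpa [hs, Function.onFun, Set.Ico_disjoint_Ico] using h
  have hLU : ∑ i ∈ Finset.range n, ∫⁻ x in s i, ‖f x‖₊ ∂ν = ∫⁻ x in U, ‖f x‖₊ ∂ν :=
    (MeasureTheory.lintegral_biUnion_finset hpd (fun i _ => hmeas i) _).symm
  have hfinS : ∀ i ∈ Finset.range n, ∫⁻ x in s i, ‖f x‖₊ ∂ν ≠ (⊤ : ENNReal) := by
    intro i hi
    exact ne_top_of_le_ne_top hfin
      (MeasureTheory.lintegral_mono' (MeasureTheory.Measure.restrict_mono (hsub i hi) le_rfl)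
        le_rfl)
  -- splitting of the integral
  have hPNint : MeasureTheory.IntegrableOn f (Set.Ico a b) P ∧
      MeasureTheory.IntegrableOn f (Set.Ico a b) N := by
    have : MeasureTheory.Integrable f (P.restrict (Set.Ico a b) + N.restrict (Set.Ico a b)) := by
      rw [← MeasureTheory.Measure.restrict_add, ← htv]; exact hf
    exact MeasureTheory.integrable_add_measure.1 this
  have hsplit : ∀ i ∈ Finset.range n,
      sInt μ f (Set.Ico a (d i)) - sInt μ f (Set.Ico a (c i)) = sInt μ f (s i) := by
    intro i hi
    have h := hcd i (Finset.mem_range.1 hi)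
    have hu : Set.Ico a (c i) ∪ Set.Ico (c i) (d i) = Set.Ico a (d i) :=
      Set.Ico_union_Ico_eq_Ico h.1 h.2.1.le
    have hd : Disjoint (Set.Ico a (c i)) (Set.Ico (c i) (d i)) :=
      Set.Ico_disjoint_Ico.2 (le_trans (min_le_left _ _) (le_max_right _ _))
    have h1 : Set.Ico a (c i) ⊆ Set.Ico a b :=
      Set.Ico_subset_Ico_right (le_trans h.2.1.le h.2.2)
    have h2 : Set.Ico (c i) (d i) ⊆ Set.Ico a b := hsub i hi
    rw [sInt, sInt, sInt, ← hu,
      MeasureTheory.setIntegral_union hd measurableSet_Ico (hPNint.1.mono_set h1)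
        (hPNint.1.mono_set h2),
      MeasureTheory.setIntegral_union hd measurableSet_Ico (hPNint.2.mono_set h1)
        (hPNint.2.mono_set h2)]
    ring
  calc ∑ i ∈ Finset.range n, |sInt μ f (Set.Ico a (d i)) - sInt μ f (Set.Ico a (c i))|
      ≤ ∑ i ∈ Finset.range n, (∫⁻ x in s i, ‖f x‖₊ ∂ν).toReal := by
        refine Finset.sum_le_sum fun i hi => ?_
        rw [hsplit i hi]
        exact sInt_abs_le' μ f (s i) (hfinS i hi)
    _ = (∑ i ∈ Finset.range n, ∫⁻ x in s i, ‖f x‖₊ ∂ν).toReal :=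
        (ENNReal.toReal_sum hfinS).symm
    _ = (∫⁻ x in U, ‖f x‖₊ ∂ν).toReal := by rw [hLU]
    _ < ε := ENNReal.toReal_lt_of_lt_ofReal hUint
end

section
/- (Density theorem) Let I ⊆ ℝ be an interval and g : ℝ → ℝ a nondecreasing left-continuous derivator with no unbounded constancy intervals. Then the set of bounded g-continuous functions lying in L¹_g(I,ℝ) is dense in L¹_g(I,ℝ). -/
open Set Filter MeasureTheory Topology
open scoped Classical

set_option maxHeartbeats 1000000 in
lemma key_measure (g : ℝ → ℝ) (hmono : Monotone g) (hlc : ∀ t : ℝ, ContinuousWithinAt g (Set.Iio t) t)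
    (μ : MeasureTheory.Measure ℝ)
    (hμ : ∀ s t : ℝ, s ≤ t → μ (Set.Ico s t) = ENNReal.ofReal (g t - g s))
    (β c : ℝ) :
    μ {x | x < β ∧ c < g x} ≤ ENNReal.ofReal (g β - c) := by
  classical
  set S : ℚ → Set ℝ := fun q => if ((q : ℝ) < β ∧ c < g q) then Set.Ico (q : ℝ) β else ∅ with hS
  have hcover : {x | x < β ∧ c < g x} ⊆ ⋃ q, S q := by
    rintro x ⟨hxβ, hcx⟩
    have h1 : ∀ᶠ s in 𝓝[<] x, c < g s := (hlc x).eventually (eventually_gt_nhds hcx)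
    obtain ⟨s, hs1, hs2⟩ := (h1.and eventually_mem_nhdsWithin).exists
    obtain ⟨q, hq1, hq2⟩ := exists_rat_btwn (show s < x from hs2)
    refine Set.mem_iUnion.2 ⟨q, ?_⟩
    have hcond : ((q : ℝ) < β ∧ c < g q) := ⟨hq2.trans hxβ, lt_of_lt_of_le hs1 (hmono hq1.le)⟩
    rw [hS]
    simp only [if_pos hcond]
    exact ⟨hq2.le, hxβ⟩
  have hdir : Directed (· ⊆ ·) S := by
    intro q r
    by_cases hq : ((q : ℝ) < β ∧ c < g q)
    · by_cases hr : ((r : ℝ) < β ∧ c < g r)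
      · have hcond : (((min q r : ℚ) : ℝ) < β ∧ c < g ((min q r : ℚ) : ℝ)) := by
          rcases min_choice q r with h | h <;> rw [h]
          exacts [hq, hr]
        refine ⟨min q r, ?_, ?_⟩
        · simp only [hS, if_pos hcond, if_pos hq]
          exact Set.Ico_subset_Ico (by exact_mod_cast min_le_left q r) le_rfl
        · simp only [hS, if_pos hcond, if_pos hr]
          exact Set.Ico_subset_Ico (by exact_mod_cast min_le_right q r) le_rfl
      · exact ⟨q, le_rfl, by simp [hS, if_neg hr]⟩
    · exact ⟨r, by simp [hS, if_neg hq], le_rfl⟩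
  calc μ {x | x < β ∧ c < g x} ≤ μ (⋃ q, S q) := measure_mono hcover
    _ = ⨆ q, μ (S q) := hdir.measure_iUnion
    _ ≤ ENNReal.ofReal (g β - c) := by
        refine iSup_le fun q => ?_
        rw [hS]
        by_cases hq : ((q : ℝ) < β ∧ c < g q)
        · simp only [if_pos hq]
          rw [hμ _ _ hq.1.le]
          exact ENNReal.ofReal_le_ofReal (by linarith [hq.2])
        · simp [if_neg hq]


/-- Bounded, `g`-continuous (uniformly), integrable. -/
def GoodFn (g : ℝ → ℝ) (μ : MeasureTheory.Measure ℝ) (h : ℝ → ℝ) : Prop :=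
  (∃ M : ℝ, ∀ t : ℝ, |h t| ≤ M) ∧
  (∀ t : ℝ, ∀ ε > (0:ℝ), ∃ δ > (0:ℝ), ∀ s : ℝ, |g s - g t| < δ → |h s - h t| < ε) ∧
  MeasureTheory.Integrable h μ

section Dev
variable (g : ℝ → ℝ) (hmono : Monotone g)
  (hlc : ∀ t : ℝ, ContinuousWithinAt g (Set.Iio t) t)
  (μ : MeasureTheory.Measure ℝ)
  (hμ : ∀ s t : ℝ, s ≤ t → μ (Set.Ico s t) = ENNReal.ofReal (g t - g s))

include hμ in
lemma fin_Icc (u v : ℝ) : μ (Set.Icc u v) < ⊤ := by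
  refine lt_of_le_of_lt (measure_mono (show Set.Icc u v ⊆ Set.Ico (min u v) (v+1) from ?_)) ?_
  · intro x hx
    exact ⟨le_trans (min_le_left _ _) hx.1, by linarith [hx.2]⟩
  · rw [hμ _ _ (by cases le_total u v with
      | inl h => simpa using le_trans (min_le_right u v) (by linarith)
      | inr h => simpa using le_trans (min_le_left u v) (by linarith))]
    exact ENNReal.ofReal_lt_top

include hmono hlc hμ in
lemma approx_Ico (a b : ℝ) (hab : a ≤ b) (ε : ℝ) (hε : 0 < ε) :
    ∃ h : ℝ → ℝ, GoodFn g μ h ∧ (∀ x, 0 ≤ h x) ∧ (∀ x, h x ≤ 1) ∧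
      ∫ x, |Set.indicator (Set.Ico a b) (fun _ => (1:ℝ)) x - h x| ∂μ < ε := by
  classical
  set δ' : ℝ := ε / 3 with hδ'def
  have hδ' : 0 < δ' := by positivity
  set ψ : ℝ → ℝ := fun y => max 0 (min (min ((y - (g a - δ')) / δ') 1) ((g b - y) / δ')) with hψ
  set h : ℝ → ℝ := fun x => ψ (g x) with hh
  have h0 : ∀ x, 0 ≤ h x := fun x => le_max_left _ _
  have h1 : ∀ x, h x ≤ 1 := fun x => by
    refine max_le zero_le_one (le_trans (min_le_left _ _) (min_le_right _ _))
  -- vanishing / one lemmas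
  have hzeroA : ∀ x : ℝ, g x ≤ g a - δ' → h x = 0 := by
    intro x hx
    have : min (min ((g x - (g a - δ')) / δ') 1) ((g b - g x) / δ') ≤ 0 :=
      le_trans (min_le_left _ _) (le_trans (min_le_left _ _) (by
        apply div_nonpos_of_nonpos_of_nonneg <;> linarith))
    exact max_eq_left this
  have hzeroB : ∀ x : ℝ, g b ≤ g x → h x = 0 := by
    intro x hx
    have : min (min ((g x - (g a - δ')) / δ') 1) ((g b - g x) / δ') ≤ 0 :=
      le_trans (min_le_right _ _) (by
        apply div_nonpos_of_nonpos_of_nonneg <;> linarith)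
    exact max_eq_left this
  have hone : ∀ x : ℝ, g a ≤ g x → g x ≤ g b - δ' → h x = 1 := by
    intro x hx1 hx2
    have e1 : min ((g x - (g a - δ')) / δ') 1 = 1 :=
      min_eq_right (by rw [le_div_iff₀ hδ']; linarith)
    have e2 : (1:ℝ) ≤ (g b - g x) / δ' := by rw [le_div_iff₀ hδ']; linarith
    rw [hh]; simp only [hψ, e1, min_eq_left e2, max_eq_right zero_le_one]
  -- Lipschitz property of ψ
  have hlip : ∀ y z : ℝ, |ψ y - ψ z| ≤ |y - z| / δ' := by
    intro y z
    have hA : |(y - (g a - δ')) / δ' - (z - (g a - δ')) / δ'| = |y - z| / δ' := by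
      rw [div_sub_div_same, abs_div, abs_of_pos hδ']
      ring_nf
    have hB : |(g b - y) / δ' - (g b - z) / δ'| = |y - z| / δ' := by
      rw [div_sub_div_same, abs_div, abs_of_pos hδ']
      congr 1
      rw [show g b - y - (g b - z) = -(y - z) by ring, abs_neg]
    calc |ψ y - ψ z| ≤ max |(0:ℝ) - 0|
          |min (min ((y - (g a - δ')) / δ') 1) ((g b - y) / δ') -
           min (min ((z - (g a - δ')) / δ') 1) ((g b - z) / δ')| :=
        abs_max_sub_max_le_max _ _ _ _
      _ ≤ |y - z| / δ' := by
        rw [sub_zero, abs_zero]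
        refine max_le (by positivity) ?_
        refine le_trans (abs_min_sub_min_le_max _ _ _ _) (max_le ?_ (le_of_eq hB))
        refine le_trans (abs_min_sub_min_le_max _ _ _ _) (max_le (le_of_eq hA) ?_)
        simp [div_nonneg (abs_nonneg _) hδ'.le]
  -- error sets
  set E₁ : Set ℝ := {x | x < a ∧ g a - δ' < g x} with hE₁
  set E₂ : Set ℝ := {x | x < b ∧ g b - δ' < g x} with hE₂
  have hmE₁ : MeasurableSet E₁ := by
    have : E₁ = Set.Iio a ∩ g ⁻¹' (Set.Ioi (g a - δ')) := rfl
    rw [this]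
    exact measurableSet_Iio.inter (hmono.measurable measurableSet_Ioi)
  have hmE₂ : MeasurableSet E₂ := by
    have : E₂ = Set.Iio b ∩ g ⁻¹' (Set.Ioi (g b - δ')) := rfl
    rw [this]
    exact measurableSet_Iio.inter (hmono.measurable measurableSet_Ioi)
  have hμE₁ : μ E₁ ≤ ENNReal.ofReal δ' := by
    have := key_measure g hmono hlc μ hμ a (g a - δ')
    simpa using this
  have hμE₂ : μ E₂ ≤ ENNReal.ofReal δ' := by
    have := key_measure g hmono hlc μ hμ b (g b - δ')
    simpa using this
  -- pointwise bound
  have hpt : ∀ x, |Set.indicator (Set.Ico a b) (fun _ => (1:ℝ)) x - h x| ≤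
      Set.indicator E₁ (fun _ => (1:ℝ)) x + Set.indicator E₂ (fun _ => (1:ℝ)) x := by
    intro x
    have hRHS0 : (0:ℝ) ≤ Set.indicator E₁ (fun _ => (1:ℝ)) x + Set.indicator E₂ (fun _ => (1:ℝ)) x := by
      apply add_nonneg <;> exact Set.indicator_nonneg (fun _ _ => zero_le_one) x
    by_cases hx1 : x < a
    · rw [Set.indicator_of_notMem (by simp [Set.mem_Ico]; intro h; linarith)]
      by_cases hx2 : g a - δ' < g x
      · have hxE : x ∈ E₁ := ⟨hx1, hx2⟩
        rw [Set.indicator_of_mem hxE]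
        have : |0 - h x| ≤ 1 := by rw [zero_sub, abs_neg, abs_of_nonneg (h0 x)]; exact h1 x
        refine le_trans this ?_
        nlinarith [Set.indicator_nonneg (fun (_:ℝ) _ => (zero_le_one (α := ℝ))) x (s := E₂) (f := fun _ => (1:ℝ))]
      · rw [hzeroA x (not_lt.1 hx2)]
        simpa using hRHS0
    · by_cases hx3 : x < b
      · rw [Set.indicator_of_mem (show x ∈ Set.Ico a b from ⟨not_lt.1 hx1, hx3⟩)]
        by_cases hx4 : g b - δ' < g x
        · have hxE : x ∈ E₂ := ⟨hx3, hx4⟩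
          have hE2one : Set.indicator E₂ (fun _ => (1:ℝ)) x = 1 := Set.indicator_of_mem hxE _
          have : |1 - h x| ≤ 1 := by
            rw [abs_of_nonneg (by linarith [h1 x])]
            linarith [h0 x]
          refine le_trans this ?_
          rw [hE2one]
          linarith [Set.indicator_nonneg (fun (_:ℝ) _ => (zero_le_one (α := ℝ))) x (s := E₁) (f := fun _ => (1:ℝ))]
        · rw [hone x (hmono (not_lt.1 hx1)) (not_lt.1 hx4)]
          simpa using hRHS0
      · rw [Set.indicator_of_notMem (by simp [Set.mem_Ico]; intro h; linarith), 
            hzeroB x (hmono (not_lt.1 hx3))]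
        simpa using hRHS0
  -- integrability of h
  have hψc : Continuous ψ := by
    rw [hψ]
    exact continuous_const.max ((((continuous_id.sub continuous_const).div_const _).min
      continuous_const).min ((continuous_const.sub continuous_id).div_const _))
  have hmh : Measurable h := hψc.measurable.comp hmono.measurable
  have hμIco : μ (Set.Ico a b) < ⊤ :=
    lt_of_le_of_lt (measure_mono Set.Ico_subset_Icc_self) (fin_Icc g μ hμ a b)
  have hμE₁' : μ E₁ < ⊤ := lt_of_le_of_lt hμE₁ ENNReal.ofReal_lt_top
  have hμE₂' : μ E₂ < ⊤ := lt_of_le_of_lt hμE₂ ENNReal.ofReal_lt_top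
  have hdomint : Integrable ((E₁ ∪ Set.Ico a b).indicator (fun _ => (1:ℝ))) μ :=
    (integrable_indicator_iff (hmE₁.union measurableSet_Ico)).2
      (integrableOn_const (ne_of_lt (lt_of_le_of_lt (measure_union_le _ _)
        (ENNReal.add_lt_top.2 ⟨hμE₁', hμIco⟩))))
  have hsupp : ∀ x, x ∉ E₁ ∪ Set.Ico a b → h x = 0 := by
    intro x hx
    rw [Set.mem_union] at hx
    push_neg at hx
    by_cases hx1 : x < a
    · refine hzeroA x ?_
      by_contra hc
      exact hx.1 ⟨hx1, not_le.1 hc⟩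
    · refine hzeroB x (hmono (not_lt.1 ?_))
      intro hx3
      exact hx.2 ⟨not_lt.1 hx1, hx3⟩
  have hinth : Integrable h μ := by
    refine hdomint.mono' hmh.aestronglyMeasurable (Filter.Eventually.of_forall fun x => ?_)
    by_cases hx : x ∈ E₁ ∪ Set.Ico a b
    · rw [Set.indicator_of_mem hx]
      rw [Real.norm_eq_abs, abs_of_nonneg (h0 x)]
      exact h1 x
    · rw [Set.indicator_of_notMem hx, hsupp x hx]
      simp
  have hgood : GoodFn g μ h := by
    refine ⟨⟨1, fun t => by rw [abs_of_nonneg (h0 t)]; exact h1 t⟩, ?_, hinth⟩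
    intro t ε' hε'
    refine ⟨δ' * ε', by positivity, fun s hs => ?_⟩
    refine lt_of_le_of_lt (hlip (g s) (g t)) ?_
    rw [div_lt_iff₀ hδ']
    linarith [hs]
  -- the integral estimate
  have hindIco : Integrable (Set.indicator (Set.Ico a b) (fun _ => (1:ℝ))) μ :=
    (integrable_indicator_iff measurableSet_Ico).2 (integrableOn_const (ne_of_lt hμIco))
  have hindE₁ : Integrable (Set.indicator E₁ (fun _ => (1:ℝ))) μ :=
    (integrable_indicator_iff hmE₁).2 (integrableOn_const (ne_of_lt hμE₁'))
  have hindE₂ : Integrable (Set.indicator E₂ (fun _ => (1:ℝ))) μ :=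
    (integrable_indicator_iff hmE₂).2 (integrableOn_const (ne_of_lt hμE₂'))
  refine ⟨h, hgood, h0, h1, ?_⟩
  calc ∫ x, |Set.indicator (Set.Ico a b) (fun _ => (1:ℝ)) x - h x| ∂μ
      ≤ ∫ x, (Set.indicator E₁ (fun _ => (1:ℝ)) x + Set.indicator E₂ (fun _ => (1:ℝ)) x) ∂μ :=
        integral_mono ((hindIco.sub hinth).abs) (hindE₁.add hindE₂) hpt
    _ = (μ E₁).toReal + (μ E₂).toReal := by
        rw [integral_add hindE₁ hindE₂, integral_indicator_const _ hmE₁,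
          integral_indicator_const _ hmE₂]
        simp [Measure.real]
    _ ≤ δ' + δ' := add_le_add (ENNReal.toReal_le_of_le_ofReal hδ'.le hμE₁)
        (ENNReal.toReal_le_of_le_ofReal hδ'.le hμE₂)
    _ < ε := by rw [hδ'def]; linarith

include hmono hlc hμ in
lemma approx_Ioo (a b : ℝ) (ε : ℝ) (hε : 0 < ε) :
    ∃ h : ℝ → ℝ, GoodFn g μ h ∧ (∀ x, 0 ≤ h x) ∧ (∀ x, h x ≤ 1) ∧
      ∫ x, |Set.indicator (Set.Ioo a b) (fun _ => (1:ℝ)) x - h x| ∂μ < ε := by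
  classical
  by_cases hab : b ≤ a
  · refine ⟨fun _ => 0, ⟨⟨0, by simp⟩, fun t ε' hε' => ⟨1, one_pos, by simp [hε']⟩,
      integrable_zero _ _ _⟩, by simp, by simp, ?_⟩
    rw [Set.Ioo_eq_empty (by exact not_lt.2 hab)]
    simpa using hε
  push_neg at hab
  -- choose a' close to a
  set s : ℕ → Set ℝ := fun n => Set.Ioc a (a + (b - a) / (n + 1)) with hs
  have hanti : Antitone s := by
    intro n m hnm
    refine Set.Ioc_subset_Ioc le_rfl (add_le_add le_rfl ?_)
    apply div_le_div_of_nonneg_left (by linarith) (by positivity)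
    exact_mod_cast Nat.succ_le_succ hnm
  have hiInter : ⋂ n, s n = ∅ := by
    ext x
    simp only [Set.mem_iInter, Set.mem_Ioc, Set.mem_empty_iff_false, iff_false, not_forall]
    by_contra hc
    push_neg at hc
    obtain ⟨hxa, hxb⟩ := hc 0
    obtain ⟨n, hn⟩ := exists_nat_gt ((b - a) / (x - a))
    obtain ⟨-, hxn⟩ := hc n
    have hxa' : 0 < x - a := by linarith
    have : (b - a) / (x - a) < (n:ℝ) + 1 := by linarith [Nat.cast_nonneg (α := ℝ) n]
    rw [div_lt_iff₀ hxa'] at this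
    have h2 : (b - a) / ((n:ℝ) + 1) < x - a := by
      rw [div_lt_iff₀ (by positivity)]
      nlinarith
    linarith
  have htend : Tendsto (fun n => μ (s n)) atTop (𝓝 0) := by
    have := MeasureTheory.tendsto_measure_iInter_atTop
      (μ := μ) (s := s) (fun n => measurableSet_Ioc.nullMeasurableSet) hanti
      ⟨0, (lt_of_le_of_lt (measure_mono Set.Ioc_subset_Icc_self) (fin_Icc g μ hμ _ _)).ne⟩
    rw [hiInter, measure_empty] at this
    exact this
  obtain ⟨n, hn⟩ := (htend.eventually_lt_const
    (show (0:ENNReal) < ENNReal.ofReal (ε/2) by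
      exact ENNReal.ofReal_pos.2 (by positivity))).exists
  set a' : ℝ := a + (b - a) / (n + 1) with ha'
  have ha1 : a < a' := by
    rw [ha']
    have : 0 < (b - a) / ((n:ℝ) + 1) := div_pos (by linarith) (by positivity)
    linarith
  have ha2 : a' ≤ b := by
    rw [ha']
    have : (b - a) / ((n:ℝ) + 1) ≤ b - a :=
      div_le_self (by linarith) (by exact_mod_cast Nat.succ_le_succ n.zero_le)
    linarith
  obtain ⟨h, hgood, h0, h1, hint⟩ := approx_Ico g hmono hlc μ hμ a' b ha2 (ε/2) (by positivity)
  refine ⟨h, hgood, h0, h1, ?_⟩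
  have hμIoc : μ (Set.Ioc a a') < ENNReal.ofReal (ε/2) := hn
  have hmIoc : MeasurableSet (Set.Ioc a a') := measurableSet_Ioc
  have hindIoc : Integrable (Set.indicator (Set.Ioc a a') (fun _ => (1:ℝ))) μ :=
    (integrable_indicator_iff hmIoc).2 (integrableOn_const
      (ne_of_lt (hμIoc.trans ENNReal.ofReal_lt_top)))
  have hμIoo : μ (Set.Ioo a b) < ⊤ :=
    lt_of_le_of_lt (measure_mono Set.Ioo_subset_Icc_self) (fin_Icc g μ hμ a b)
  have hindIoo : Integrable (Set.indicator (Set.Ioo a b) (fun _ => (1:ℝ))) μ :=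
    (integrable_indicator_iff measurableSet_Ioo).2 (integrableOn_const (ne_of_lt hμIoo))
  have hμIco : μ (Set.Ico a' b) < ⊤ :=
    lt_of_le_of_lt (measure_mono Set.Ico_subset_Icc_self) (fin_Icc g μ hμ a' b)
  have hindIco : Integrable (Set.indicator (Set.Ico a' b) (fun _ => (1:ℝ))) μ :=
    (integrable_indicator_iff measurableSet_Ico).2 (integrableOn_const (ne_of_lt hμIco))
  have hinth : Integrable h μ := hgood.2.2
  have hpt : ∀ x, |Set.indicator (Set.Ioo a b) (fun _ => (1:ℝ)) x - h x| ≤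
      Set.indicator (Set.Ioc a a') (fun _ => (1:ℝ)) x +
        |Set.indicator (Set.Ico a' b) (fun _ => (1:ℝ)) x - h x| := by
    intro x
    have tri : |Set.indicator (Set.Ioo a b) (fun _ => (1:ℝ)) x - h x| ≤
        |Set.indicator (Set.Ioo a b) (fun _ => (1:ℝ)) x -
          Set.indicator (Set.Ico a' b) (fun _ => (1:ℝ)) x| +
        |Set.indicator (Set.Ico a' b) (fun _ => (1:ℝ)) x - h x| := by
      have := abs_sub_abs_le_abs_sub (0:ℝ) (0:ℝ)
      exact abs_sub_le _ _ _
    refine le_trans tri (add_le_add ?_ le_rfl)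
    by_cases hx1 : x ∈ Set.Ioo a b
    · by_cases hx2 : x ∈ Set.Ico a' b
      · rw [Set.indicator_of_mem hx1, Set.indicator_of_mem hx2]
        simp [Set.indicator_nonneg (fun _ _ => zero_le_one) x]
      · have hxa' : x ≤ a' := by
          rcases Set.mem_Ioo.1 hx1 with ⟨h1', h2'⟩
          by_contra hc
          exact hx2 ⟨le_of_not_ge (by intro h; exact hc (by linarith)), h2'⟩
        have hxIoc : x ∈ Set.Ioc a a' := ⟨(Set.mem_Ioo.1 hx1).1, hxa'⟩
        rw [Set.indicator_of_mem hx1, Set.indicator_of_notMem hx2, Set.indicator_of_mem hxIoc]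
        simp
    · by_cases hx2 : x ∈ Set.Ico a' b
      · exfalso
        rcases Set.mem_Ico.1 hx2 with ⟨h1', h2'⟩
        exact hx1 ⟨lt_of_lt_of_le ha1 h1', h2'⟩
      · rw [Set.indicator_of_notMem hx1, Set.indicator_of_notMem hx2]
        simp [Set.indicator_nonneg (fun _ _ => zero_le_one) x]
  calc ∫ x, |Set.indicator (Set.Ioo a b) (fun _ => (1:ℝ)) x - h x| ∂μ
      ≤ ∫ x, (Set.indicator (Set.Ioc a a') (fun _ => (1:ℝ)) x +
          |Set.indicator (Set.Ico a' b) (fun _ => (1:ℝ)) x - h x|) ∂μ :=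
        integral_mono ((hindIoo.sub hinth).abs) (hindIoc.add ((hindIco.sub hinth).abs)) hpt
    _ = (μ (Set.Ioc a a')).toReal +
          ∫ x, |Set.indicator (Set.Ico a' b) (fun _ => (1:ℝ)) x - h x| ∂μ := by
        have habs : Integrable
            (fun x => |Set.indicator (Set.Ico a' b) (fun _ => (1:ℝ)) x - h x|) μ :=
          (hindIco.sub hinth).abs
        rw [integral_add hindIoc habs, integral_indicator_const _ hmIoc]
        simp [Measure.real]
    _ < ε/2 + ε/2 := by
        refine add_lt_add ?_ hint
        have := (ENNReal.lt_ofReal_iff_toReal_lt (LT.lt.ne_top hμIoc)).1 hμIoc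
        exact this
    _ = ε := by ring

include hmono hlc hμ in
lemma approx_union (p q : ℕ → ℝ) :
    ∀ n : ℕ, ∀ ε : ℝ, 0 < ε →
    ∃ h : ℝ → ℝ, GoodFn g μ h ∧ (∀ x, 0 ≤ h x) ∧ (∀ x, h x ≤ 1) ∧
      ∫ x, |Set.indicator (⋃ i ∈ Finset.range n, Set.Ioo (p i) (q i))
        (fun _ => (1:ℝ)) x - h x| ∂μ < ε := by
  classical
  intro n
  induction n with
  | zero =>
    intro ε hε
    refine ⟨fun _ => 0, ⟨⟨0, by simp⟩, fun t ε' hε' => ⟨1, one_pos, by simp [hε']⟩,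
      integrable_zero _ _ _⟩, by simp, by simp, ?_⟩
    simp only [Finset.range_zero, Finset.notMem_empty, Set.iUnion_of_empty,
      Set.iUnion_empty, Set.indicator_empty]
    simpa using hε
  | succ n ih =>
    intro ε hε
    obtain ⟨h₁, hg₁, h₁0, h₁1, hi₁⟩ := ih (ε/2) (by positivity)
    obtain ⟨h₂, hg₂, h₂0, h₂1, hi₂⟩ := approx_Ioo g hmono hlc μ hμ (p n) (q n) (ε/2) (by positivity)
    set A : Set ℝ := ⋃ i ∈ Finset.range n, Set.Ioo (p i) (q i) with hA
    set B : Set ℝ := Set.Ioo (p n) (q n) with hB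
    have hunion : (⋃ i ∈ Finset.range (n+1), Set.Ioo (p i) (q i)) = B ∪ A := by
      rw [Finset.range_add_one, Finset.set_biUnion_insert]
    have hmA : MeasurableSet A :=
      MeasurableSet.biUnion (Finset.range n).countable_toSet (fun i _ => measurableSet_Ioo)
    have hμIoo : ∀ i : ℕ, μ (Set.Ioo (p i) (q i)) < ⊤ := fun i =>
      lt_of_le_of_lt (measure_mono Set.Ioo_subset_Icc_self) (fin_Icc g μ hμ _ _)
    have hμA : μ A < ⊤ :=
      lt_of_le_of_lt (measure_biUnion_finset_le _ _)
        (ENNReal.sum_lt_top.2 fun i _ => hμIoo i)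
    have hμB : μ B < ⊤ := hμIoo n
    set h : ℝ → ℝ := fun x => max (h₂ x) (h₁ x) with hh
    have h0 : ∀ x, 0 ≤ h x := fun x => le_trans (h₂0 x) (le_max_left _ _)
    have h1 : ∀ x, h x ≤ 1 := fun x => max_le (h₂1 x) (h₁1 x)
    have hmaxeq : h = fun x => (h₂ x + h₁ x + |h₂ x - h₁ x|) / 2 := by
      funext x
      rcases le_total (h₂ x) (h₁ x) with hle | hle
      · rw [hh]
        simp only [max_eq_right hle, abs_of_nonpos (by linarith : h₂ x - h₁ x ≤ 0)]
        ring
      · rw [hh]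
        simp only [max_eq_left hle, abs_of_nonneg (by linarith : 0 ≤ h₂ x - h₁ x)]
        ring
    have hinth : Integrable h μ := by
      rw [hmaxeq]
      exact ((hg₂.2.2.add hg₁.2.2).add ((hg₂.2.2.sub hg₁.2.2).abs)).div_const 2
    have hgood : GoodFn g μ h := by
      refine ⟨⟨1, fun t => by rw [abs_of_nonneg (h0 t)]; exact h1 t⟩, ?_, hinth⟩
      intro t ε' hε'
      obtain ⟨δ₁, hδ₁, hd₁⟩ := hg₁.2.1 t ε' hε'
      obtain ⟨δ₂, hδ₂, hd₂⟩ := hg₂.2.1 t ε' hε'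
      refine ⟨min δ₁ δ₂, lt_min hδ₁ hδ₂, fun s hs => ?_⟩
      refine lt_of_le_of_lt (abs_max_sub_max_le_max _ _ _ _) (max_lt ?_ ?_)
      · exact hd₂ s (lt_of_lt_of_le hs (min_le_right _ _))
      · exact hd₁ s (lt_of_lt_of_le hs (min_le_left _ _))
    have hindmax : ∀ (C : Set ℝ) (x : ℝ), x ∈ C ∨ x ∉ C →
        True := fun _ _ _ => trivial
    have hindU : ∀ x, Set.indicator (B ∪ A) (fun _ => (1:ℝ)) x =
        max (Set.indicator B (fun _ => (1:ℝ)) x) (Set.indicator A (fun _ => (1:ℝ)) x) := by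
      intro x
      by_cases hxB : x ∈ B <;> by_cases hxA : x ∈ A <;>
        simp [Set.indicator_apply, hxB, hxA]
    have hpt : ∀ x, |Set.indicator (B ∪ A) (fun _ => (1:ℝ)) x - h x| ≤
        |Set.indicator B (fun _ => (1:ℝ)) x - h₂ x| +
          |Set.indicator A (fun _ => (1:ℝ)) x - h₁ x| := by
      intro x
      rw [hindU x]
      refine le_trans (abs_max_sub_max_le_max _ _ _ _) (max_le ?_ ?_)
      · exact le_add_of_nonneg_right (abs_nonneg _)
      · exact le_add_of_nonneg_left (abs_nonneg _)
    have hindB : Integrable (Set.indicator B (fun _ => (1:ℝ))) μ :=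
      (integrable_indicator_iff measurableSet_Ioo).2 (integrableOn_const (ne_of_lt hμB))
    have hindA : Integrable (Set.indicator A (fun _ => (1:ℝ))) μ :=
      (integrable_indicator_iff hmA).2 (integrableOn_const (ne_of_lt hμA))
    have hindBA : Integrable (Set.indicator (B ∪ A) (fun _ => (1:ℝ))) μ :=
      (integrable_indicator_iff (measurableSet_Ioo.union hmA)).2 (integrableOn_const
        (ne_of_lt (lt_of_le_of_lt (measure_union_le _ _) (ENNReal.add_lt_top.2 ⟨hμB, hμA⟩))))
    have habs₂ : Integrable (fun x => |Set.indicator B (fun _ => (1:ℝ)) x - h₂ x|) μ :=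
      (hindB.sub hg₂.2.2).abs
    have habs₁ : Integrable (fun x => |Set.indicator A (fun _ => (1:ℝ)) x - h₁ x|) μ :=
      (hindA.sub hg₁.2.2).abs
    refine ⟨h, hgood, h0, h1, ?_⟩
    rw [hunion]
    calc ∫ x, |Set.indicator (B ∪ A) (fun _ => (1:ℝ)) x - h x| ∂μ
        ≤ ∫ x, (|Set.indicator B (fun _ => (1:ℝ)) x - h₂ x| +
            |Set.indicator A (fun _ => (1:ℝ)) x - h₁ x|) ∂μ :=
          integral_mono ((hindBA.sub hinth).abs) (habs₂.add habs₁) hpt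
      _ = (∫ x, |Set.indicator B (fun _ => (1:ℝ)) x - h₂ x| ∂μ) +
            ∫ x, |Set.indicator A (fun _ => (1:ℝ)) x - h₁ x| ∂μ := integral_add habs₂ habs₁
      _ < ε/2 + ε/2 := add_lt_add hi₂ hi₁
      _ = ε := by ring

include hmono hlc hμ in
lemma approx_set (s : Set ℝ) (hs : MeasurableSet s) (hsfin : μ s < ⊤) (ε : ℝ) (hε : 0 < ε) :
    ∃ h : ℝ → ℝ, GoodFn g μ h ∧
      ∫ x, |Set.indicator s (fun _ => (1:ℝ)) x - h x| ∂μ < ε := by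
  classical
  haveI : IsLocallyFiniteMeasure μ := ⟨fun x => ⟨Set.Ioo (x-1) (x+1),
    Ioo_mem_nhds (by linarith) (by linarith),
    lt_of_le_of_lt (measure_mono Set.Ioo_subset_Icc_self) (fin_Icc g μ hμ _ _)⟩⟩
  obtain ⟨U, hsU, hUopen, hUlt⟩ := Set.exists_isOpen_lt_add s hsfin.ne
    (show ENNReal.ofReal (ε/3) ≠ 0 from (ENNReal.ofReal_pos.2 (by positivity)).ne')
  have hUfin : μ U < ⊤ := hUlt.trans (ENNReal.add_lt_top.2 ⟨hsfin, ENNReal.ofReal_lt_top⟩)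
  have hUs : μ (U \ s) < ENNReal.ofReal (ε/3) :=
    measure_diff_lt_of_lt_add hs.nullMeasurableSet hsU hsfin.ne hUlt
  set e : ℕ ≃ ℚ × ℚ := (Denumerable.eqv (ℚ × ℚ)).symm with he
  set p : ℕ → ℝ := fun n => if Set.Ioo ((e n).1 : ℝ) ((e n).2 : ℝ) ⊆ U then ((e n).1 : ℝ) else 0
    with hp
  set q : ℕ → ℝ := fun n => if Set.Ioo ((e n).1 : ℝ) ((e n).2 : ℝ) ⊆ U then ((e n).2 : ℝ) else 0
    with hq
  have hW : ∀ n, Set.Ioo (p n) (q n) ⊆ U := by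
    intro n
    by_cases hc : Set.Ioo ((e n).1 : ℝ) ((e n).2 : ℝ) ⊆ U
    · simp only [hp, hq, if_pos hc]
      exact hc
    · simp only [hp, hq, if_neg hc, Set.Ioo_self]
      exact Set.empty_subset _
  have hUeq : U ⊆ ⋃ n, Set.Ioo (p n) (q n) := by
    intro x hx
    obtain ⟨r, hr, hball⟩ := Metric.isOpen_iff.1 hUopen x hx
    rw [Real.ball_eq_Ioo] at hball
    obtain ⟨qp, hqp1, hqp2⟩ := exists_rat_btwn (show x - r < x by linarith)
    obtain ⟨qq, hqq1, hqq2⟩ := exists_rat_btwn (show x < x + r by linarith)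
    have hsub : Set.Ioo ((qp:ℝ)) ((qq:ℝ)) ⊆ U :=
      fun y hy => hball ⟨by linarith [hy.1], by linarith [hy.2]⟩
    refine Set.mem_iUnion.2 ⟨e.symm (qp, qq), ?_⟩
    have hE : e (e.symm (qp, qq)) = (qp, qq) := e.apply_symm_apply _
    simp only [hp, hq, hE]
    rw [if_pos hsub, if_pos hsub]
    exact ⟨hqp2, hqq1⟩
  set V : ℕ → Set ℝ := fun m => ⋃ i ∈ Finset.range m, Set.Ioo (p i) (q i) with hV
  have hVmono : Monotone V := fun m m' hmm' =>
    Set.biUnion_subset_biUnion_left (Finset.range_subset_range.2 hmm')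
  have hVU : ∀ m, V m ⊆ U := fun m => Set.iUnion₂_subset fun i _ => hW i
  have hVm : ∀ m, MeasurableSet (V m) := fun m =>
    MeasurableSet.biUnion (Finset.range m).countable_toSet fun i _ => measurableSet_Ioo
  have hdiffanti : Antitone (fun m => U \ V m) := fun m m' hmm' =>
    Set.diff_subset_diff_right (hVmono hmm')
  have hiInter : (⋂ m, (U \ V m)) = ∅ := by
    rw [← Set.diff_iUnion]
    have hUV : (⋃ m, V m) = U := by
      refine Set.Subset.antisymm (Set.iUnion_subset hVU) fun x hx => ?_
      obtain ⟨n, hn⟩ := Set.mem_iUnion.1 (hUeq hx)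
      exact Set.mem_iUnion.2 ⟨n + 1, Set.mem_biUnion (Finset.self_mem_range_succ n) hn⟩
    rw [hUV, Set.diff_self]
  have htend0 : Tendsto (fun m => μ (U \ V m)) atTop (𝓝 0) := by
    have := MeasureTheory.tendsto_measure_iInter_atTop (μ := μ)
      (fun m => ((hUopen.measurableSet.diff (hVm m)).nullMeasurableSet))
      hdiffanti ⟨0, (lt_of_le_of_lt (measure_mono Set.diff_subset) hUfin).ne⟩
    rwa [hiInter, measure_empty] at this
  obtain ⟨m, hm⟩ := (htend0.eventually_lt_const
    (ENNReal.ofReal_pos.2 (show (0:ℝ) < ε/3 by positivity))).exists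
  obtain ⟨h, hgood, h0, h1, hinth⟩ := approx_union g hmono hlc μ hμ p q m (ε/3) (by positivity)
  have hinth' : ∫ (x : ℝ), |Set.indicator (V m) (fun _ => (1:ℝ)) x - h x| ∂μ < ε / 3 := hinth
  refine ⟨h, hgood, ?_⟩
  have hWU : V m ⊆ U := hVU m
  have hμUs : μ (U \ s) < ⊤ := hUs.trans ENNReal.ofReal_lt_top
  have hμUW : μ (U \ V m) < ⊤ := lt_of_le_of_lt (measure_mono Set.diff_subset) hUfin
  have hmUs : MeasurableSet (U \ s) := hUopen.measurableSet.diff hs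
  have hmUW : MeasurableSet (U \ V m) := hUopen.measurableSet.diff (hVm m)
  have hindUs : Integrable (Set.indicator (U \ s) (fun _ => (1:ℝ))) μ :=
    (integrable_indicator_iff hmUs).2 (integrableOn_const (ne_of_lt hμUs))
  have hindUW : Integrable (Set.indicator (U \ V m) (fun _ => (1:ℝ))) μ :=
    (integrable_indicator_iff hmUW).2 (integrableOn_const (ne_of_lt hμUW))
  have hindW : Integrable (Set.indicator (V m) (fun _ => (1:ℝ))) μ :=
    (integrable_indicator_iff (hVm m)).2 (integrableOn_const
      (ne_of_lt (lt_of_le_of_lt (measure_mono hWU) hUfin)))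
  have hindS : Integrable (Set.indicator s (fun _ => (1:ℝ))) μ :=
    (integrable_indicator_iff hs).2 (integrableOn_const (ne_of_lt hsfin))
  have habs : Integrable (fun x => |Set.indicator (V m) (fun _ => (1:ℝ)) x - h x|) μ :=
    (hindW.sub hgood.2.2).abs
  have hpt : ∀ x, |Set.indicator s (fun _ => (1:ℝ)) x - h x| ≤
      Set.indicator (U \ s) (fun _ => (1:ℝ)) x + (Set.indicator (U \ V m) (fun _ => (1:ℝ)) x
        + |Set.indicator (V m) (fun _ => (1:ℝ)) x - h x|) := by
    intro x
    have tri : |Set.indicator s (fun _ => (1:ℝ)) x - h x| ≤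
        |Set.indicator s (fun _ => (1:ℝ)) x - Set.indicator (V m) (fun _ => (1:ℝ)) x| +
        |Set.indicator (V m) (fun _ => (1:ℝ)) x - h x| := abs_sub_le _ _ _
    have hcase : |Set.indicator s (fun _ => (1:ℝ)) x - Set.indicator (V m) (fun _ => (1:ℝ)) x| ≤
        Set.indicator (U \ s) (fun _ => (1:ℝ)) x + Set.indicator (U \ V m) (fun _ => (1:ℝ)) x := by
      by_cases hxs : x ∈ s <;> by_cases hxW : x ∈ V m
      · simp [Set.indicator_of_mem hxs, Set.indicator_of_mem hxW,
          Set.indicator_nonneg (fun _ _ => (zero_le_one : (0:ℝ) ≤ 1)),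
          add_nonneg (Set.indicator_nonneg (fun _ _ => (zero_le_one : (0:ℝ) ≤ 1)) x)
            (Set.indicator_nonneg (fun _ _ => (zero_le_one : (0:ℝ) ≤ 1)) x)]
      · have hxUW : x ∈ U \ V m := ⟨hsU hxs, hxW⟩
        rw [Set.indicator_of_mem hxs, Set.indicator_of_notMem hxW, Set.indicator_of_mem hxUW]
        simp [Set.indicator_nonneg (fun _ _ => (zero_le_one : (0:ℝ) ≤ 1)) x]
      · have hxUs : x ∈ U \ s := ⟨hWU hxW, hxs⟩
        rw [Set.indicator_of_notMem hxs, Set.indicator_of_mem hxW, Set.indicator_of_mem hxUs]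
        simp [Set.indicator_nonneg (fun _ _ => (zero_le_one : (0:ℝ) ≤ 1)) x]
      · rw [Set.indicator_of_notMem hxs, Set.indicator_of_notMem hxW]
        simp [add_nonneg (Set.indicator_nonneg (fun _ _ => (zero_le_one : (0:ℝ) ≤ 1)) x)
            (Set.indicator_nonneg (fun _ _ => (zero_le_one : (0:ℝ) ≤ 1)) x)]
    linarith [tri, hcase]
  calc ∫ x, |Set.indicator s (fun _ => (1:ℝ)) x - h x| ∂μ
      ≤ ∫ x, (Set.indicator (U \ s) (fun _ => (1:ℝ)) x +
          (Set.indicator (U \ V m) (fun _ => (1:ℝ)) x +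
            |Set.indicator (V m) (fun _ => (1:ℝ)) x - h x|)) ∂μ :=
        integral_mono ((hindS.sub hgood.2.2).abs) (hindUs.add (hindUW.add habs)) hpt
    _ = (μ (U \ s)).toReal + ((μ (U \ V m)).toReal +
          ∫ x, |Set.indicator (V m) (fun _ => (1:ℝ)) x - h x| ∂μ) := by
        have hsum : Integrable (fun x => Set.indicator (U \ V m) (fun _ => (1:ℝ)) x +
            |Set.indicator (V m) (fun _ => (1:ℝ)) x - h x|) μ := hindUW.add habs
        rw [integral_add hindUs hsum, integral_add hindUW habs,
          integral_indicator_const _ hmUs, integral_indicator_const _ hmUW]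
        simp [Measure.real]
    _ < ε/3 + (ε/3 + ε/3) := by
        refine add_lt_add ((ENNReal.lt_ofReal_iff_toReal_lt hμUs.ne).1 hUs)
          (add_lt_add ((ENNReal.lt_ofReal_iff_toReal_lt hμUW.ne).1 hm) hinth')
    _ = ε := by ring
end Dev

/-- Density theorem: bounded `g`-continuous functions in `L¹_g(I)` are dense in `L¹_g(I)`. -/
theorem stmt16 (g : ℝ → ℝ) (hmono : Monotone g) (hlc : LeftCont g)
    (hnc : ∀ t : ℝ, (∃ s, t < s ∧ g s ≠ g t) ∧ (∃ s, s < t ∧ g s ≠ g t))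
    (μ : MeasureTheory.Measure ℝ)
    (hμ : ∀ s t : ℝ, s ≤ t → μ (Set.Ico s t) = ENNReal.ofReal (g t - g s))
    (I : Set ℝ) (hI : I.OrdConnected)
    (f : ℝ → ℝ) (hf : MeasureTheory.IntegrableOn f I μ) :
    ∀ ε > 0, ∃ h : ℝ → ℝ,
      (∃ M : ℝ, ∀ t ∈ I, |h t| ≤ M) ∧
      (∀ t ∈ I, ∀ ε' > 0, ∃ δ > 0, ∀ s ∈ I, |g s - g t| < δ → |h s - h t| < ε') ∧
      MeasureTheory.IntegrableOn h I μ ∧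
      (∫ t in I, |f t - h t| ∂μ) < ε := by
  classical
  set P : (ℝ → ℝ) → Prop := fun F => ∀ ε : ℝ, 0 < ε →
    ∃ h : ℝ → ℝ, GoodFn g μ h ∧ ∫ x, |F x - h x| ∂μ < ε with hP
  have hind : ∀ (c : ℝ) ⦃s : Set ℝ⦄, MeasurableSet s → μ s < ⊤ →
      P (s.indicator fun _ => c) := by
    intro c s hs hsfin ε hε
    by_cases hc : c = 0
    · refine ⟨fun _ => 0, ⟨⟨0, by simp⟩, fun t ε' hε' => ⟨1, one_pos, by simp [hε']⟩,
        integrable_zero _ _ _⟩, ?_⟩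
      simp [hc]
      exact hε
    · have hcpos : 0 < |c| := abs_pos.2 hc
      obtain ⟨h₀, hg₀, hint₀⟩ := approx_set g hmono hlc μ hμ s hs hsfin (ε / |c|) (by positivity)
      refine ⟨fun x => c * h₀ x, ⟨?_, ?_, hg₀.2.2.const_mul c⟩, ?_⟩
      · obtain ⟨M, hM⟩ := hg₀.1
        refine ⟨|c| * M, fun t => ?_⟩
        rw [abs_mul]
        exact mul_le_mul_of_nonneg_left (hM t) (abs_nonneg c)
      · intro t ε' hε'
        obtain ⟨δ, hδ, hd⟩ := hg₀.2.1 t (ε' / |c|) (by positivity)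
        refine ⟨δ, hδ, fun u hu => ?_⟩
        have : |c * h₀ u - c * h₀ t| = |c| * |h₀ u - h₀ t| := by
          rw [← mul_sub, abs_mul]
        rw [this]
        calc |c| * |h₀ u - h₀ t| < |c| * (ε' / |c|) :=
              mul_lt_mul_of_pos_left (hd u hu) hcpos
          _ = ε' := by field_simp
      · have hpt : ∀ x, |s.indicator (fun _ => c) x - c * h₀ x| =
            |c| * |s.indicator (fun _ => (1:ℝ)) x - h₀ x| := by
          intro x
          by_cases hx : x ∈ s
          · rw [Set.indicator_of_mem hx, Set.indicator_of_mem hx, ← abs_mul, mul_sub, mul_one]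
          · rw [Set.indicator_of_notMem hx, Set.indicator_of_notMem hx, ← abs_mul, mul_sub]
            ring_nf
        calc ∫ x, |s.indicator (fun _ => c) x - c * h₀ x| ∂μ
            = ∫ x, |c| * |s.indicator (fun _ => (1:ℝ)) x - h₀ x| ∂μ := by
              congr 1; funext x; exact hpt x
          _ = |c| * ∫ x, |s.indicator (fun _ => (1:ℝ)) x - h₀ x| ∂μ := integral_const_mul _ _
          _ < |c| * (ε / |c|) := mul_lt_mul_of_pos_left hint₀ hcpos
          _ = ε := by field_simp
  have hadd : ∀ ⦃F G : ℝ → ℝ⦄, Disjoint (Function.support F) (Function.support G) →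
      Integrable F μ → Integrable G μ → P F → P G → P (F + G) := by
    intro F G _ hFi hGi hPF hPG ε hε
    obtain ⟨h₁, hg₁, hi₁⟩ := hPF (ε/2) (by positivity)
    obtain ⟨h₂, hg₂, hi₂⟩ := hPG (ε/2) (by positivity)
    refine ⟨fun x => h₁ x + h₂ x, ⟨?_, ?_, hg₁.2.2.add hg₂.2.2⟩, ?_⟩
    · obtain ⟨M₁, hM₁⟩ := hg₁.1
      obtain ⟨M₂, hM₂⟩ := hg₂.1
      exact ⟨M₁ + M₂, fun t => le_trans (abs_add_le _ _) (add_le_add (hM₁ t) (hM₂ t))⟩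
    · intro t ε' hε'
      obtain ⟨δ₁, hδ₁, hd₁⟩ := hg₁.2.1 t (ε'/2) (by positivity)
      obtain ⟨δ₂, hδ₂, hd₂⟩ := hg₂.2.1 t (ε'/2) (by positivity)
      refine ⟨min δ₁ δ₂, lt_min hδ₁ hδ₂, fun u hu => ?_⟩
      have := add_lt_add (hd₁ u (lt_of_lt_of_le hu (min_le_left _ _)))
        (hd₂ u (lt_of_lt_of_le hu (min_le_right _ _)))
      calc |h₁ u + h₂ u - (h₁ t + h₂ t)| = |(h₁ u - h₁ t) + (h₂ u - h₂ t)| := by ring_nf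
        _ ≤ |h₁ u - h₁ t| + |h₂ u - h₂ t| := abs_add_le _ _
        _ < ε'/2 + ε'/2 := this
        _ = ε' := by ring
    · have habs₁ : Integrable (fun x => |F x - h₁ x|) μ := (hFi.sub hg₁.2.2).abs
      have habs₂ : Integrable (fun x => |G x - h₂ x|) μ := (hGi.sub hg₂.2.2).abs
      have hpt : ∀ x, |(F + G) x - (h₁ x + h₂ x)| ≤ |F x - h₁ x| + |G x - h₂ x| := by
        intro x
        simp only [Pi.add_apply]
        calc |F x + G x - (h₁ x + h₂ x)| = |(F x - h₁ x) + (G x - h₂ x)| := by ring_nf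
          _ ≤ _ := abs_add_le _ _
      calc ∫ x, |(F + G) x - (h₁ x + h₂ x)| ∂μ
          ≤ ∫ x, (|F x - h₁ x| + |G x - h₂ x|) ∂μ :=
            integral_mono (((hFi.add hGi).sub (hg₁.2.2.add hg₂.2.2)).abs)
              (habs₁.add habs₂) hpt
        _ = (∫ x, |F x - h₁ x| ∂μ) + ∫ x, |G x - h₂ x| ∂μ := integral_add habs₁ habs₂
        _ < ε/2 + ε/2 := add_lt_add hi₁ hi₂
        _ = ε := by ring
  have hclosed : IsClosed {F : Lp ℝ 1 μ | P ⇑F} := by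
    refine isClosed_of_closure_subset ?_
    intro F hF ε hε
    obtain ⟨G, hGS, hdist⟩ := Metric.mem_closure_iff.1 hF (ε/2) (by positivity)
    obtain ⟨h, hgood, hlt⟩ := hGS (ε/2 - dist F G) (by linarith)
    have hFi : Integrable (⇑F) μ := L1.integrable_coeFn F
    have hGi : Integrable (⇑G) μ := L1.integrable_coeFn G
    have hFG : ∫ x, |F x - G x| ∂μ = dist F G := by
      rw [dist_eq_norm, L1.norm_eq_integral_norm]
      refine (integral_congr_ae ?_).symm
      filter_upwards [Lp.coeFn_sub F G] with x hx
      rw [hx]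
      simp [Real.norm_eq_abs]
    refine ⟨h, hgood, ?_⟩
    have habs₁ : Integrable (fun x => |F x - G x|) μ := (hFi.sub hGi).abs
    have habs₂ : Integrable (fun x => |G x - h x|) μ := (hGi.sub hgood.2.2).abs
    calc ∫ x, |F x - h x| ∂μ ≤ ∫ x, (|F x - G x| + |G x - h x|) ∂μ :=
          integral_mono ((hFi.sub hgood.2.2).abs) (habs₁.add habs₂)
            (fun x => abs_sub_le _ _ _)
      _ = (∫ x, |F x - G x| ∂μ) + ∫ x, |G x - h x| ∂μ := integral_add habs₁ habs₂
      _ < dist F G + (ε/2 - dist F G) := by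
          refine add_lt_add_of_le_of_lt (le_of_eq hFG) hlt
      _ ≤ ε := by linarith
  have hae : ∀ ⦃F G : ℝ → ℝ⦄, F =ᵐ[μ] G → Integrable F μ → P F → P G := by
    intro F G hFG hFi hPF ε hε
    obtain ⟨h, hgood, hlt⟩ := hPF ε hε
    refine ⟨h, hgood, ?_⟩
    have : (fun x => |G x - h x|) =ᵐ[μ] fun x => |F x - h x| := by
      filter_upwards [hFG] with x hx
      rw [hx]
    rwa [integral_congr_ae this]
  have hIm : MeasurableSet I := hI.measurableSet
  have hf' : Integrable (I.indicator f) μ := hf.integrable_indicator hIm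
  have hPf : P (I.indicator f) := Integrable.induction P hind hadd hclosed hae hf'
  intro ε hε
  obtain ⟨h, ⟨⟨M, hM⟩, hgc, hint⟩, hlt⟩ := hPf ε hε
  refine ⟨h, ⟨M, fun t _ => hM t⟩, fun t _ ε' hε' => ?_, hint.integrableOn, ?_⟩
  · obtain ⟨δ, hδ, hd⟩ := hgc t ε' hε'
    exact ⟨δ, hδ, fun s _ hs => hd s hs⟩
  · calc (∫ t in I, |f t - h t| ∂μ)
        = ∫ t in I, |I.indicator f t - h t| ∂μ :=
          setIntegral_congr_fun hIm (fun x hx => by rw [Set.indicator_of_mem hx])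
      _ ≤ ∫ t, |I.indicator f t - h t| ∂μ :=
          setIntegral_le_integral ((hf'.sub hint).abs)
            (Filter.Eventually.of_forall fun x => abs_nonneg _)
      _ < ε := hlt
end

section
/- Let I be an interval, g : ℝ → ℝ a nondecreasing left-continuous derivator, [c,d] ⊂ ℝ, and f : I → [c,d] a g-integrable function. Then for every ε > 0 there exists a bounded g-continuous function h : I → [c,d] (taking values in the same interval [c,d]) such that ∫_I |f - h| dμ_g < ε. -/
open Set Filter MeasureTheory Topology
open scoped Classical

/-- The set of points which have a later point with the same `g`-value is `μ`-null. -/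
lemma stmt17_null (g : ℝ → ℝ) (hmono : Monotone g) (μ : MeasureTheory.Measure ℝ)
    (hμ : ∀ s t : ℝ, s ≤ t → μ (Set.Ico s t) = ENNReal.ofReal (g t - g s)) :
    μ {t : ℝ | ∃ s, t < s ∧ g s = g t} = 0 := by
  set N : ℚ → Set ℝ := fun q => {t | t < (q:ℝ) ∧ g t = g q} with hN
  have hNq : ∀ q : ℚ, μ (N q) = 0 := by
    intro q
    have key : ∀ t ∈ N q, μ (Set.Ico t (q:ℝ)) = 0 := by
      intro t ht
      rw [hμ t q ht.1.le, ht.2, sub_self, ENNReal.ofReal_zero]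
    have hcover : N q ⊆ (⋃ (r : ℚ) (_ : (r:ℝ) ∈ N q), Set.Ico (r:ℝ) (q:ℝ)) ∪
        (N q ∩ {sInf (N q)}) := by
      intro t ht
      by_cases hex : ∃ t' ∈ N q, t' < t
      · obtain ⟨t', ht', hlt⟩ := hex
        obtain ⟨r, hr1, hr2⟩ := exists_rat_btwn hlt
        left
        refine Set.mem_iUnion.2 ⟨r, Set.mem_iUnion.2 ⟨⟨hr2.trans ht.1, ?_⟩, hr2.le, ht.1⟩⟩
        have h1 : g t' ≤ g r := hmono hr1.le
        have h2 : g (r:ℝ) ≤ g t := hmono hr2.le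
        rw [ht'.2] at h1; rw [ht.2] at h2
        exact le_antisymm h2 h1
      · push_neg at hex
        have hlb : ∀ t' ∈ N q, t ≤ t' := hex
        right
        refine ⟨ht, ?_⟩
        exact (le_antisymm (csInf_le ⟨t, hlb⟩ ht) (le_csInf ⟨t, ht⟩ hlb)).symm ▸ rfl
    refine le_antisymm ((measure_mono hcover).trans ?_) (zero_le)
    refine le_trans (measure_union_le _ _) ?_
    have h1 : μ (⋃ (r : ℚ) (_ : (r:ℝ) ∈ N q), Set.Ico (r:ℝ) (q:ℝ)) = 0 :=
      measure_iUnion_null fun r => measure_iUnion_null fun hr => key _ hr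
    have h2 : μ (N q ∩ {sInf (N q)}) = 0 := by
      by_cases hmem : sInf (N q) ∈ N q
      · refine le_antisymm (le_trans (measure_mono ?_) (key _ hmem).le) (zero_le)
        intro t ⟨_, ht2⟩
        rw [Set.mem_singleton_iff] at ht2
        subst ht2
        exact ⟨le_refl _, hmem.1⟩
      · have : N q ∩ {sInf (N q)} = ∅ := by
          ext t; simp only [Set.mem_inter_iff, Set.mem_singleton_iff, Set.mem_empty_iff_false,
            iff_false, not_and]
          rintro ht rfl; exact hmem ht
        rw [this, measure_empty]
    rw [h1, h2, add_zero]
  have hsub : {t : ℝ | ∃ s, t < s ∧ g s = g t} ⊆ ⋃ q : ℚ, N q := by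
    rintro t ⟨s, hts, hgs⟩
    obtain ⟨r, hr1, hr2⟩ := exists_rat_btwn hts
    refine Set.mem_iUnion.2 ⟨r, hr1, ?_⟩
    have h1 : g t ≤ g r := hmono hr1.le
    have h2 : g (r:ℝ) ≤ g s := hmono hr2.le
    rw [hgs] at h2
    exact le_antisymm h1 h2
  exact le_antisymm ((measure_mono hsub).trans (measure_iUnion_null hNq).le) (zero_le)


lemma stmt17_locfin (g : ℝ → ℝ) (hmono : Monotone g) (μ : MeasureTheory.Measure ℝ)
    (hμ : ∀ s t : ℝ, s ≤ t → μ (Set.Ico s t) = ENNReal.ofReal (g t - g s))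
    (a b : ℝ) : μ {t : ℝ | g t ∈ Set.Icc a b} < ⊤ := by
  set S : Set ℝ := {t : ℝ | g t ∈ Set.Icc a b} with hS
  by_cases hne : S.Nonempty
  swap
  · rw [Set.not_nonempty_iff_eq_empty] at hne
    rw [hne, measure_empty]; exact ENNReal.zero_lt_top
  obtain ⟨t₀, ht₀⟩ := hne
  have hIco : ∀ s t : ℝ, μ (Set.Ico s t) ≤ ENNReal.ofReal (g t - g s) := by
    intro s t
    rcases le_total s t with h | h
    · exact (hμ s t h).le
    · rw [Set.Ico_eq_empty (not_lt.2 h), measure_empty]; exact zero_le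
  have hcover : S ⊆ (S ∩ Set.Iio t₀) ∪ (S ∩ Set.Ici t₀) := by
    intro t ht
    rcases lt_or_ge t t₀ with h | h
    · exact Or.inl ⟨ht, h⟩
    · exact Or.inr ⟨ht, h⟩
  refine lt_of_le_of_lt ((measure_mono hcover).trans (measure_union_le _ _)) ?_
  have hright : μ (S ∩ Set.Ici t₀) < ⊤ := by
    by_cases hbdd : BddAbove (S ∩ Set.Ici t₀)
    · obtain ⟨M, hM⟩ := hbdd
      have : S ∩ Set.Ici t₀ ⊆ Set.Ico t₀ (M + 1) := by
        intro t ⟨ht1, ht2⟩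
        exact ⟨ht2, lt_of_le_of_lt (hM ⟨ht1, ht2⟩) (lt_add_one M)⟩
      exact lt_of_le_of_lt ((measure_mono this).trans (hIco _ _)) ENNReal.ofReal_lt_top
    · rw [not_bddAbove_iff] at hbdd
      have hu : ∀ n : ℕ, ∃ u : ℝ, u ∈ S ∩ Set.Ici t₀ ∧ (n : ℝ) < u := by
        intro n; obtain ⟨u, hu1, hu2⟩ := hbdd n; exact ⟨u, hu1, hu2⟩
      choose u hu1 hu2 using hu
      have hsub : S ∩ Set.Ici t₀ ⊆ ⋃ n : ℕ, Set.Ico t₀ (u n) := by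
        intro t ⟨ht1, ht2⟩
        obtain ⟨n, hn⟩ := exists_nat_ge t
        exact Set.mem_iUnion.2 ⟨n, ht2, lt_of_le_of_lt hn (hu2 n)⟩
      have hdir : Directed (· ⊆ ·) (fun n : ℕ => Set.Ico t₀ (u n)) := by
        intro n m
        obtain ⟨k, hk⟩ := exists_nat_ge (max (u n) (u m))
        refine ⟨k, Set.Ico_subset_Ico_right ?_, Set.Ico_subset_Ico_right ?_⟩
        · exact le_of_lt (lt_of_le_of_lt (le_trans (le_max_left _ _) hk) (hu2 k))
        · exact le_of_lt (lt_of_le_of_lt (le_trans (le_max_right _ _) hk) (hu2 k))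
      refine lt_of_le_of_lt (measure_mono hsub) ?_
      rw [hdir.measure_iUnion]
      refine lt_of_le_of_lt (iSup_le fun n => ?_) (ENNReal.ofReal_lt_top (r := b - a))
      refine (hIco _ _).trans (ENNReal.ofReal_le_ofReal ?_)
      have h1 : g (u n) ≤ b := (hu1 n).1.2
      have h2 : a ≤ g t₀ := ht₀.1
      linarith
  have hleft : μ (S ∩ Set.Iio t₀) < ⊤ := by
    by_cases hbdd : BddBelow (S ∩ Set.Iio t₀)
    · obtain ⟨m, hm⟩ := hbdd
      have : S ∩ Set.Iio t₀ ⊆ Set.Ico (m - 1) t₀ := by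
        intro t ⟨ht1, ht2⟩
        exact ⟨le_trans (by linarith) (hm ⟨ht1, ht2⟩), ht2⟩
      exact lt_of_le_of_lt ((measure_mono this).trans (hIco _ _)) ENNReal.ofReal_lt_top
    · rw [not_bddBelow_iff] at hbdd
      have hv : ∀ n : ℕ, ∃ v : ℝ, v ∈ S ∩ Set.Iio t₀ ∧ v < -(n : ℝ) := by
        intro n; obtain ⟨v, hv1, hv2⟩ := hbdd (-(n : ℝ)); exact ⟨v, hv1, hv2⟩
      choose v hv1 hv2 using hv
      have hsub : S ∩ Set.Iio t₀ ⊆ ⋃ n : ℕ, Set.Ico (v n) t₀ := by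
        intro t ⟨ht1, ht2⟩
        obtain ⟨n, hn⟩ := exists_nat_ge (-t)
        refine Set.mem_iUnion.2 ⟨n, le_of_lt (lt_of_lt_of_le (hv2 n) (by linarith)), ht2⟩
      have hdir : Directed (· ⊆ ·) (fun n : ℕ => Set.Ico (v n) t₀) := by
        intro n m
        obtain ⟨k, hk⟩ := exists_nat_ge (max (-(v n)) (-(v m)))
        refine ⟨k, Set.Ico_subset_Ico_left ?_, Set.Ico_subset_Ico_left ?_⟩
        · have := le_trans (le_max_left (-(v n)) (-(v m))) hk
          have := hv2 k; linarith
        · have := le_trans (le_max_right (-(v n)) (-(v m))) hk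
          have := hv2 k; linarith
      refine lt_of_le_of_lt (measure_mono hsub) ?_
      rw [hdir.measure_iUnion]
      refine lt_of_le_of_lt (iSup_le fun n => ?_) (ENNReal.ofReal_lt_top (r := b - a))
      refine (hIco _ _).trans (ENNReal.ofReal_le_ofReal ?_)
      have h1 : a ≤ g (v n) := (hv1 n).1.1
      have h2 : g t₀ ≤ b := ht₀.2
      linarith
  exact ENNReal.add_lt_top.2 ⟨hleft, hright⟩

lemma stmt17_clamp (c d F K : ℝ) (h1 : c ≤ F) (h2 : F ≤ d) :
    |F - max c (min d K)| ≤ |F - K| := by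
  rcases le_total K c with hK | hK
  · have hmin : min d K = K := min_eq_right (hK.trans (h1.trans h2))
    rw [hmin, max_eq_left hK, abs_of_nonneg (by linarith), abs_of_nonneg (by linarith)]
    linarith
  · rcases le_total d K with hK' | hK'
    · rw [min_eq_left hK', max_eq_right (h1.trans h2),
        abs_of_nonpos (by linarith), abs_of_nonpos (by linarith)]
      linarith
    · rw [min_eq_right hK', max_eq_right hK]


/-- Approximation of a `[c,d]`-valued `g`-integrable function by a `g`-continuous
function with values in the same interval `[c,d]`. -/
theorem stmt17 (g : ℝ → ℝ) (hmono : Monotone g) (hlc : LeftCont g)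
    (μ : MeasureTheory.Measure ℝ)
    (hμ : ∀ s t : ℝ, s ≤ t → μ (Set.Ico s t) = ENNReal.ofReal (g t - g s))
    (I : Set ℝ) (hI : I.OrdConnected)
    (c d : ℝ) (hcd : c ≤ d) (f : ℝ → ℝ) (hrange : ∀ t ∈ I, f t ∈ Set.Icc c d)
    (hf : MeasureTheory.IntegrableOn f I μ) :
    ∀ ε > 0, ∃ h : ℝ → ℝ,
      (∀ t ∈ I, h t ∈ Set.Icc c d) ∧
      (∀ t ∈ I, ∀ ε' > 0, ∃ δ > 0, ∀ s ∈ I, |g s - g t| < δ → |h s - h t| < ε') ∧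
      (∫ t in I, |f t - h t| ∂μ) < ε := by
  intro ε hε
  have hImeas : MeasurableSet I := hI.measurableSet
  have hgm : Measurable g := hmono.measurable
  set μI := μ.restrict I with hμI
  set f₀ : ℝ → ℝ := hf.aestronglyMeasurable.mk f with hf₀
  have hf₀m : Measurable f₀ := hf.aestronglyMeasurable.stronglyMeasurable_mk.measurable
  have hff₀ : f =ᵐ[μI] f₀ := hf.aestronglyMeasurable.ae_eq_mk
  -- the generalized inverse
  set βe : ℝ → EReal := fun x => sSup (Real.toEReal '' {s : ℝ | g s ≤ x}) with hβe
  have hβe_mono : Monotone βe := fun x y hxy =>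
    sSup_le_sSup (Set.image_mono fun s hs => le_trans hs hxy)
  have hβem : Measurable βe := hβe_mono.measurable
  set F : ℝ → ℝ := fun x => f₀ (βe x).toReal with hF
  have hFm : Measurable F := hf₀m.comp (measurable_ereal_toReal.comp hβem)
  -- a.e. identity
  have hkey : ∀ t : ℝ, (∀ s, t < s → ¬ g s = g t) → βe (g t) = (t : EReal) := by
    intro t ht
    refine le_antisymm (sSup_le ?_) (le_sSup ⟨t, show g t ≤ g t from le_rfl, rfl⟩)
    rintro x ⟨s, hs, rfl⟩
    rw [EReal.coe_le_coe_iff]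
    by_contra hcon
    push_neg at hcon
    exact ht s hcon (le_antisymm hs (hmono hcon.le))
  have hgood : ∀ᵐ t ∂μ, ¬ ∃ s, t < s ∧ g s = g t := by
    rw [ae_iff]
    simpa using stmt17_null g hmono μ hμ
  have hcomp : (fun t => F (g t)) =ᵐ[μ] f₀ := by
    filter_upwards [hgood] with t ht
    push_neg at ht
    simp only [hF]
    rw [hkey t ht, EReal.toReal_coe]
  have hfae : f =ᵐ[μI] fun t => F (g t) :=
    hff₀.trans (ae_restrict_of_ae hcomp.symm)
  -- the image measure
  set ν : MeasureTheory.Measure ℝ := MeasureTheory.Measure.map g μI with hν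
  have hνlf : IsLocallyFiniteMeasure ν := by
    constructor
    intro x
    refine ⟨Set.Icc (x - 1) (x + 1), Icc_mem_nhds (by linarith) (by linarith), ?_⟩
    rw [hν, MeasureTheory.Measure.map_apply hgm measurableSet_Icc]
    exact lt_of_le_of_lt (MeasureTheory.Measure.restrict_apply_le _ _)
      (stmt17_locfin g hmono μ hμ (x - 1) (x + 1))
  have hFint : Integrable F ν := by
    rw [hν, integrable_map_measure hFm.aestronglyMeasurable hgm.aemeasurable]
    exact hf.congr hfae
  have hFcd : ∀ᵐ x ∂ν, c ≤ F x ∧ F x ≤ d := by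
    rw [hν, MeasureTheory.ae_map_iff hgm.aemeasurable]
    · filter_upwards [hfae, ae_restrict_mem hImeas] with t h1 h2
      have := hrange t h2
      rw [← h1]
      exact ⟨this.1, this.2⟩
    · exact (measurableSet_le measurable_const hFm).inter (measurableSet_le hFm measurable_const)
  obtain ⟨k, k_supp, k_close, k_cont, k_int⟩ :=
    hFint.exists_hasCompactSupport_integral_sub_le (half_pos hε)
  set k' : ℝ → ℝ := fun x => max c (min d (k x)) with hk'
  have hk'c : Continuous k' := continuous_const.max (continuous_const.min k_cont)
  refine ⟨fun t => k' (g t), ?_, ?_, ?_⟩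
  · intro t _
    exact ⟨le_max_left _ _, max_le hcd (le_trans (min_le_left _ _) le_rfl)⟩
  · intro t _ ε' hε'
    obtain ⟨δ, hδ, hδ'⟩ := Metric.continuousAt_iff.1 (hk'c.continuousAt (x := g t)) ε' hε'
    refine ⟨δ, hδ, fun s _ hlt => ?_⟩
    have := hδ' (x := g s) (by rwa [Real.dist_eq])
    rwa [Real.dist_eq] at this
  · have hmeas' : Measurable fun x => |F x - k' x| := (hFm.sub hk'c.measurable).abs
    have e1 : (∫ t in I, |f t - k' (g t)| ∂μ) = ∫ t, |F (g t) - k' (g t)| ∂μI :=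
      integral_congr_ae (hfae.mono fun t ht => by dsimp only at ht ⊢; rw [ht])
    have e2 : (∫ x, |F x - k' x| ∂ν) = ∫ t, |F (g t) - k' (g t)| ∂μI := by
      rw [hν, integral_map hgm.aemeasurable hmeas'.aestronglyMeasurable]
    have hnormint : Integrable (fun x => ‖F x - k x‖) ν := (hFint.sub k_int).norm
    have hptwise : (fun x => |F x - k' x|) ≤ᵐ[ν] fun x => ‖F x - k x‖ := by
      filter_upwards [hFcd] with x hx
      rw [Real.norm_eq_abs]
      exact stmt17_clamp c d (F x) (k x) hx.1 hx.2
    have hint1 : Integrable (fun x => |F x - k' x|) ν := by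
      refine hnormint.mono hmeas'.aestronglyMeasurable ?_
      filter_upwards [hptwise] with x hx
      rwa [Real.norm_eq_abs, abs_abs, norm_norm]
    have e3 : (∫ x, |F x - k' x| ∂ν) ≤ ∫ x, ‖F x - k x‖ ∂ν :=
      integral_mono_ae hint1 hnormint hptwise
    calc (∫ t in I, |f t - k' (g t)| ∂μ) = ∫ x, |F x - k' x| ∂ν := by rw [e1, e2]
      _ ≤ ∫ x, ‖F x - k x‖ ∂ν := e3
      _ ≤ ε / 2 := k_close
      _ < ε := half_lt_self hε
end
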